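/- arXiv:2212.00918 — 7 statements merged into one kernel-verified Lean document; each statement's English description precedes it below -/
import Mathlib

section
/- Let k, l, a and b be positive integers with max{a, b} ≥ 2 and gcd(a, b) = 1. Then every positive rational number r can be written in the form r = φ(k·m^a)/φ(l·n^b) for some positive integers m and n. -/
lemma bez_aux (a b : ℕ) (ha : 0 < a) (hb : 0 < b) (h : Nat.gcd a b = 1) :
    ∃ x y : ℕ, 1 ≤ x ∧ 1 ≤ y ∧ a * x = b * y + 1 := by
  obtain ⟨x0, y0, h0⟩ : ∃ x0 y0 : ℕ, a * x0 = b * y0 + 1 := by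
    rcases eq_or_lt_of_le (Nat.succ_le_of_lt hb) with hb1 | hb2
    · exact ⟨1, a - 1, by subst hb1; omega⟩
    · have hc : Nat.Coprime a b := h
      have hmod : a ^ b.totient % b = 1 % b := Nat.ModEq.pow_totient hc
      have h1 : 1 % b = 1 := Nat.mod_eq_of_lt hb2
      have h3 : a ^ b.totient = b * (a ^ b.totient / b) + 1 := by
        have := Nat.div_add_mod (a ^ b.totient) b
        omega
      have ht : 0 < b.totient := Nat.totient_pos.mpr (by omega)
      refine ⟨a ^ (b.totient - 1), a ^ b.totient / b, ?_⟩
      have : a * a ^ (b.totient - 1) = a ^ b.totient := by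
        rw [← pow_succ']
        congr 1
        omega
      omega
  refine ⟨x0 + b, y0 + a, by omega, by omega, ?_⟩
  have e1 : a * (x0 + b) = a * x0 + a * b := by ring
  have e2 : b * (y0 + a) = b * y0 + a * b := by ring
  omega

theorem stmt_0 (k l a b : ℕ) (hk : 0 < k) (hl : 0 < l) (ha : 0 < a) (hb : 0 < b)
    (hmax : 2 ≤ max a b) (hab : Nat.gcd a b = 1) (r : ℚ) (hr : 0 < r) :
    ∃ m n : ℕ, 0 < m ∧ 0 < n ∧
      r = (Nat.totient (k * m ^ a) : ℚ) / (Nat.totient (l * n ^ b) : ℚ) := by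
  set u : ℕ := r.num.toNat with hu_def
  set v : ℕ := r.den with hv_def
  have hnum : (u : ℤ) = r.num := Int.toNat_of_nonneg (le_of_lt (Rat.num_pos.mpr hr))
  have hu0 : 0 < u := by
    have := Rat.num_pos.mpr hr; omega
  have hv0 : 0 < v := r.pos
  have hruv : (u : ℚ) = r * v := by
    have h := Rat.mul_den_eq_num r
    have hnumq : (u : ℚ) = (r.num : ℚ) := by exact_mod_cast congrArg (Int.cast : ℤ → ℚ) hnum
    rw [hnumq, ← h]
  obtain ⟨x, y, hx1, hy1, hxy⟩ := bez_aux a b ha hb hab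
  obtain ⟨y', x', hy'1, hx'1, hxy'⟩ := bez_aux b a hb ha (by rwa [Nat.gcd_comm])
  set C : ℕ := l * u with hC_def
  set D : ℕ := k * v with hD_def
  have hC0 : 0 < C := Nat.mul_pos hl hu0
  have hD0 : 0 < D := Nat.mul_pos hk hv0
  refine ⟨C ^ x * D ^ x', C ^ y * D ^ y', by positivity, by positivity, ?_⟩
  set m : ℕ := C ^ x * D ^ x' with hm_def
  set n : ℕ := C ^ y * D ^ y' with hn_def
  have hm0 : 0 < m := by positivity
  have hn0 : 0 < n := by positivity
  set N₁ : ℕ := k * m ^ a with hN₁_def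
  set N₂ : ℕ := l * n ^ b with hN₂_def
  have hN₁0 : 0 < N₁ := by positivity
  have hN₂0 : 0 < N₂ := by positivity
  -- key numeric identity
  have ex : x * a = y * b + 1 := by rw [mul_comm x a, mul_comm y b]; exact hxy
  have ey : y' * b = x' * a + 1 := by rw [mul_comm y' b, mul_comm x' a]; exact hxy'
  have hkey : v * N₁ = u * N₂ := by
    have e1 : v * N₁ = C ^ (x * a) * D ^ (x' * a) * D := by
      rw [hN₁_def, hm_def, mul_pow, ← pow_mul, ← pow_mul, hD_def]
      ring
    have e2 : u * N₂ = C ^ (y * b) * D ^ (y' * b) * C := by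
      rw [hN₂_def, hn_def, mul_pow, ← pow_mul, ← pow_mul, hC_def]
      ring
    calc v * N₁ = C ^ (x * a) * D ^ (x' * a) * D := e1
      _ = C ^ (y * b + 1) * D ^ (x' * a) * D := by rw [ex]
      _ = C ^ (y * b) * D ^ (x' * a + 1) * C := by rw [pow_succ, pow_succ]; ring
      _ = C ^ (y * b) * D ^ (y' * b) * C := by rw [ey]
      _ = u * N₂ := e2.symm
  -- equal prime factor sets
  have hpf : N₁.primeFactors = N₂.primeFactors := by
    have hx0 : x ≠ 0 := by omega
    have hy0 : y ≠ 0 := by omega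
    have hx'0 : x' ≠ 0 := by omega
    have hy'0 : y' ≠ 0 := by omega
    rw [hN₁_def, hN₂_def, Nat.primeFactors_mul (by omega) (by positivity),
      Nat.primeFactors_mul (by omega) (by positivity),
      Nat.primeFactors_pow _ (by omega), Nat.primeFactors_pow _ (by omega),
      hm_def, hn_def,
      Nat.primeFactors_mul (by positivity) (by positivity),
      Nat.primeFactors_mul (by positivity) (by positivity),
      Nat.primeFactors_pow _ hx0, Nat.primeFactors_pow _ hx'0,
      Nat.primeFactors_pow _ hy0, Nat.primeFactors_pow _ hy'0,
      hC_def, hD_def,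
      Nat.primeFactors_mul (by omega) (by omega),
      Nat.primeFactors_mul (by omega) (by omega)]
    ext p
    simp only [Finset.mem_union]
    tauto
  -- totient identities
  have h1 := Nat.totient_mul_prod_primeFactors N₁
  have h2 := Nat.totient_mul_prod_primeFactors N₂
  rw [← hpf] at h2
  set Q : ℕ := ∏ p ∈ N₁.primeFactors, p with hQ_def
  set R : ℕ := ∏ p ∈ N₁.primeFactors, (p - 1) with hR_def
  have hQ0 : 0 < Q := Finset.prod_pos fun p hp => (Nat.prime_of_mem_primeFactors hp).pos
  have hφ2 : 0 < N₂.totient := Nat.totient_pos.mpr hN₂0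
  rw [eq_div_iff (by exact_mod_cast hφ2.ne')]
  have c1 : (N₁.totient : ℚ) * Q = N₁ * R := by exact_mod_cast h1
  have c2 : (N₂.totient : ℚ) * Q = N₂ * R := by exact_mod_cast h2
  have c3 : (v : ℚ) * N₁ = u * N₂ := by exact_mod_cast hkey
  have hQv : (Q : ℚ) * v ≠ 0 := by positivity
  have hcast : (r * N₂.totient) * ((Q : ℚ) * v) = (N₁.totient : ℚ) * ((Q : ℚ) * v) := by
    calc (r * N₂.totient) * ((Q : ℚ) * v) = (r * v) * (N₂.totient * Q) := by ring
      _ = (u : ℚ) * (N₂ * R) := by rw [← hruv, c2]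
      _ = ((u : ℚ) * N₂) * R := by ring
      _ = ((v : ℚ) * N₁) * R := by rw [c3]
      _ = (v : ℚ) * ((N₁ : ℚ) * R) := by ring
      _ = (v : ℚ) * (N₁.totient * Q) := by rw [← c1]
      _ = (N₁.totient : ℚ) * ((Q : ℚ) * v) := by ring
  exact mul_right_cancel₀ hQv hcast
end

section
/- Every positive rational number r can be written in the form r = φ(m^2)/φ(n^2) for some positive integers m and n. -/
private def f (m : ℕ) : ℕ := Nat.totient (m ^ 2)

private lemma f_pos {m : ℕ} (hm : 0 < m) : 0 < f m :=
  Nat.totient_pos.2 (by positivity)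

private lemma f_mul {m n : ℕ} (h : Nat.Coprime m n) : f (m * n) = f m * f n := by
  unfold f
  rw [mul_pow, Nat.totient_mul (Nat.Coprime.pow 2 2 h)]

private lemma f_prime_pow {p : ℕ} (hp : p.Prime) (k : ℕ) :
    f (p ^ (k + 1)) = p ^ (2 * k + 1) * (p - 1) := by
  unfold f
  rw [← pow_mul, Nat.totient_prime_pow hp (by omega)]
  congr 2
  omega

private lemma step_even {p : ℕ} (hp : p.Prime) (k β a' b' m₁ n₁ : ℕ)
    (hm : ¬ p ∣ m₁) (hn : ¬ p ∣ n₁)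
    (heq : a' * f n₁ = b' * f m₁) :
    (p ^ (β + 2 * k) * a') * f (p ^ 1 * n₁) = (p ^ β * b') * f (p ^ (k + 1) * m₁) := by
  have cop_m : Nat.Coprime (p ^ (k + 1)) m₁ :=
    Nat.Coprime.pow_left _ ((Nat.Prime.coprime_iff_not_dvd hp).2 hm)
  have cop_n : Nat.Coprime (p ^ 1) n₁ :=
    Nat.Coprime.pow_left _ ((Nat.Prime.coprime_iff_not_dvd hp).2 hn)
  rw [f_mul cop_m, f_mul cop_n, f_prime_pow hp k, f_prime_pow hp 0]
  have h1 : p ^ (β + 2 * k) * a' * (p ^ (2 * 0 + 1) * (p - 1) * f n₁)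
      = p ^ (β + 2 * k) * p ^ (2 * 0 + 1) * (p - 1) * (a' * f n₁) := by ring
  rw [h1, heq]
  ring

private lemma step_odd {p : ℕ} (hp : p.Prime) (k β a' b' m₁ n₁ : ℕ)
    (hm : ¬ p ∣ m₁)
    (heq : a' * f n₁ = (b' * (p - 1)) * f m₁) :
    (p ^ (β + (2 * k + 1)) * a') * f n₁ = (p ^ β * b') * f (p ^ (k + 1) * m₁) := by
  have cop_m : Nat.Coprime (p ^ (k + 1)) m₁ :=
    Nat.Coprime.pow_left _ ((Nat.Prime.coprime_iff_not_dvd hp).2 hm)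
  rw [f_mul cop_m, f_prime_pow hp k]
  have h1 : p ^ (β + (2 * k + 1)) * a' * f n₁
      = p ^ (β + (2 * k + 1)) * (a' * f n₁) := by ring
  rw [h1, heq]
  ring

private lemma main : ∀ N a b : ℕ, 0 < a → 0 < b →
    (∀ q : ℕ, q.Prime → q ∣ a * b → q < N) →
    ∃ m n : ℕ, 0 < m ∧ 0 < n ∧ (∀ q : ℕ, q.Prime → q ∣ m * n → q < N) ∧
      a * f n = b * f m := by
  intro N
  induction N using Nat.strong_induction_on with
  | _ N IH =>
    intro a b ha hb hbound
    by_cases hab : a * b = 1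
    · have ha1 : a = 1 := Nat.eq_one_of_mul_eq_one_right hab
      have hb1 : b = 1 := Nat.eq_one_of_mul_eq_one_left hab
      subst ha1; subst hb1
      refine ⟨1, 1, one_pos, one_pos, fun q hq hdvd => ?_, rfl⟩
      have : q = 1 := Nat.eq_one_of_dvd_one (by simpa using hdvd)
      exact absurd (this ▸ hq) Nat.not_prime_one
    · have hab1 : 1 < a * b := by
        have := Nat.mul_pos ha hb; omega
      have hne : (a * b).primeFactors.Nonempty := by
        rw [Nat.nonempty_primeFactors]; exact hab1
      set p := (a * b).primeFactors.max' hne with hpdef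
      have hpmem : p ∈ (a * b).primeFactors := Finset.max'_mem _ hne
      have hp : p.Prime := Nat.prime_of_mem_primeFactors hpmem
      have hpdvd : p ∣ a * b := Nat.dvd_of_mem_primeFactors hpmem
      have hpN : p < N := hbound p hp hpdvd
      have hmax : ∀ q : ℕ, q.Prime → q ∣ a * b → q ≤ p := fun q hq hdvd =>
        Finset.le_max' _ q (Nat.mem_primeFactors.2 ⟨hq, hdvd, by omega⟩)
      set α := a.factorization p with hαdef
      set β := b.factorization p with hβdef
      set a' := a / p ^ α with ha'def
      set b' := b / p ^ β with hb'def
      have haeq : p ^ α * a' = a := Nat.ordProj_mul_ordCompl_eq_self a p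
      have hbeq : p ^ β * b' = b := Nat.ordProj_mul_ordCompl_eq_self b p
      have ha' : 0 < a' := Nat.ordCompl_pos p (by omega)
      have hb' : 0 < b' := Nat.ordCompl_pos p (by omega)
      have hpa' : ¬ p ∣ a' := Nat.not_dvd_ordCompl hp (by omega)
      have hpb' : ¬ p ∣ b' := Nat.not_dvd_ordCompl hp (by omega)
      have hp1 : 0 < p - 1 := by have := hp.two_le; omega
      have hsmall : ∀ q : ℕ, q.Prime → q ∣ a' * b' * (p - 1) → q < p := by
        intro q hq hdvd
        rcases (Nat.Prime.dvd_mul hq).1 hdvd with h | h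
        · rcases (Nat.Prime.dvd_mul hq).1 h with h | h
          · have hda : q ∣ a := haeq ▸ Dvd.dvd.mul_left h _
            have hle : q ≤ p := hmax q hq (hda.mul_right b)
            have : q ≠ p := fun he => hpa' (he ▸ h)
            omega
          · have hdb : q ∣ b := hbeq ▸ Dvd.dvd.mul_left h _
            have hle : q ≤ p := hmax q hq (hdb.mul_left a)
            have : q ≠ p := fun he => hpb' (he ▸ h)
            omega
        · have := Nat.le_of_dvd hp1 h
          omega
      -- helper for prime bounds of constructed m, n
      have hbnd : ∀ (s t m₁ n₁ : ℕ), (∀ q : ℕ, q.Prime → q ∣ m₁ * n₁ → q < p) →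
          ∀ q : ℕ, q.Prime → q ∣ (p ^ s * m₁) * (p ^ t * n₁) → q < N := by
        intro s t m₁ n₁ hsm q hq hdvd
        have h2 : q ∣ (p ^ s * p ^ t) * (m₁ * n₁) := by
          rwa [mul_mul_mul_comm] at hdvd
        rcases (Nat.Prime.dvd_mul hq).1 h2 with h | h
        · have : q ∣ p := hq.dvd_of_dvd_pow (show q ∣ p ^ (s+t) by rwa [← pow_add] at h)
          have : q = p := (Nat.prime_dvd_prime_iff_eq hq hp).1 this
          omega
        · exact lt_trans (hsm q hq h) hpN
      have hppos : 0 < p := hp.pos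
      rcases le_or_gt β α with hle | hlt
      · rcases Nat.even_or_odd (α - β) with ⟨j, hj⟩ | ⟨j, hj⟩
        · -- α = β + 2j
          obtain ⟨m₁, n₁, hm₁, hn₁, hb₁, heq₁⟩ := IH p hpN a' b' ha' hb'
            (fun q hq hd => hsmall q hq (hd.mul_right _))
          have hpm₁ : ¬ p ∣ m₁ := fun h => absurd (hb₁ p hp (h.mul_right n₁)) (lt_irrefl p)
          have hpn₁ : ¬ p ∣ n₁ := fun h => absurd (hb₁ p hp (h.mul_left m₁)) (lt_irrefl p)
          refine ⟨p ^ (j + 1) * m₁, p ^ 1 * n₁, by positivity, by positivity, ?_, ?_⟩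
          · intro q hq hd
            exact hbnd (j + 1) 1 m₁ n₁ hb₁ q hq (by rwa [mul_comm (p ^ (j+1) * m₁)] at hd ⊢)
          · rw [← haeq, ← hbeq, show α = β + 2 * j by omega]
            exact step_even hp j β a' b' m₁ n₁ hpm₁ hpn₁ heq₁
        · -- α = β + 2j + 1
          obtain ⟨m₁, n₁, hm₁, hn₁, hb₁, heq₁⟩ := IH p hpN a' (b' * (p - 1)) ha'
            (by positivity)
            (fun q hq hd => hsmall q hq (by rwa [← mul_assoc] at hd))
          have hpm₁ : ¬ p ∣ m₁ := fun h => absurd (hb₁ p hp (h.mul_right n₁)) (lt_irrefl p)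
          refine ⟨p ^ (j + 1) * m₁, n₁, by positivity, hn₁, ?_, ?_⟩
          · intro q hq hd
            refine hbnd (j + 1) 0 m₁ n₁ hb₁ q hq ?_
            simpa using hd
          · rw [← haeq, ← hbeq, show α = β + (2 * j + 1) by omega]
            exact step_odd hp j β a' b' m₁ n₁ hpm₁ heq₁
      · rcases Nat.even_or_odd (β - α) with ⟨j, hj⟩ | ⟨j, hj⟩
        · -- β = α + 2j
          obtain ⟨m₁, n₁, hm₁, hn₁, hb₁, heq₁⟩ := IH p hpN a' b' ha' hb'
            (fun q hq hd => hsmall q hq (hd.mul_right _))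
          have hpm₁ : ¬ p ∣ m₁ := fun h => absurd (hb₁ p hp (h.mul_right n₁)) (lt_irrefl p)
          have hpn₁ : ¬ p ∣ n₁ := fun h => absurd (hb₁ p hp (h.mul_left m₁)) (lt_irrefl p)
          refine ⟨p ^ 1 * m₁, p ^ (j + 1) * n₁, by positivity, by positivity, ?_, ?_⟩
          · intro q hq hd
            exact hbnd 1 (j + 1) m₁ n₁ hb₁ q hq hd
          · rw [← haeq, ← hbeq, show β = α + 2 * j by omega]
            exact (step_even hp j α b' a' n₁ m₁ hpn₁ hpm₁ heq₁.symm).symm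
        · -- β = α + 2j + 1
          obtain ⟨m₁, n₁, hm₁, hn₁, hb₁, heq₁⟩ := IH p hpN (a' * (p - 1)) b'
            (by positivity) hb'
            (fun q hq hd => hsmall q hq (by
              rwa [show a' * b' * (p - 1) = a' * (p - 1) * b' by ring]))
          have hpm₁ : ¬ p ∣ m₁ := fun h => absurd (hb₁ p hp (h.mul_right n₁)) (lt_irrefl p)
          have hpn₁ : ¬ p ∣ n₁ := fun h => absurd (hb₁ p hp (h.mul_left m₁)) (lt_irrefl p)
          refine ⟨m₁, p ^ (j + 1) * n₁, hm₁, by positivity, ?_, ?_⟩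
          · intro q hq hd
            refine hbnd 0 (j + 1) m₁ n₁ hb₁ q hq ?_
            simpa using hd
          · rw [← haeq, ← hbeq, show β = α + (2 * j + 1) by omega]
            exact (step_odd hp j α b' a' n₁ m₁ hpn₁ heq₁.symm).symm

theorem stmt_1 (r : ℚ) (hr : 0 < r) :
    ∃ m n : ℕ, 0 < m ∧ 0 < n ∧
      r = (Nat.totient (m ^ 2) : ℚ) / (Nat.totient (n ^ 2) : ℚ) := by
  set a := r.num.natAbs with hadef
  set b := r.den with hbdef
  have ha : 0 < a := Int.natAbs_pos.2 (Rat.num_pos.2 hr).ne'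
  have hb : 0 < b := r.pos
  obtain ⟨m, n, hm, hn, _, heq⟩ := main (a * b + 1) a b ha hb
    (fun q hq hd => by
      have h1 : 0 < a * b := Nat.mul_pos ha hb
      have := Nat.le_of_dvd h1 hd
      omega)
  refine ⟨m, n, hm, hn, ?_⟩
  have hfm : 0 < f m := f_pos hm
  have hfn : 0 < f n := f_pos hn
  have hr2 : r = (a : ℚ) / (b : ℚ) := by
    have h0 : (a : ℚ) = (r.num : ℚ) := by
      rw [hadef]
      rw [← Int.cast_natCast (R := ℚ), Int.natAbs_of_nonneg (Rat.num_pos.2 hr).le]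
    rw [h0, hbdef]
    exact (Rat.num_div_den r).symm
  rw [hr2]
  rw [div_eq_div_iff (by exact_mod_cast hb.ne') (by exact_mod_cast hfn.ne')]
  have : (a : ℚ) * f n = (b : ℚ) * f m := by exact_mod_cast heq
  show (a : ℚ) * (Nat.totient (n ^ 2) : ℚ) = (Nat.totient (m ^ 2) : ℚ) * b
  calc (a : ℚ) * (Nat.totient (n ^ 2) : ℚ) = (a : ℚ) * f n := rfl
    _ = (b : ℚ) * f m := this
    _ = (Nat.totient (m ^ 2) : ℚ) * b := by rw [mul_comm]; rfl
end

section
/- Let k, l, a and b be positive integers with max{a, b} ≥ 2. Then every positive rational number can be written in the form φ(k·m^a)/φ(l·n^b) with m, n positive integers if and only if gcd(a, b) = 1 or (a, b, k, l) = (2, 2, 1, 1). -/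
open Nat Finset

lemma phi_fact (N : ℕ) (hN : N ≠ 0) (π : ℕ) :
    (N.totient).factorization π =
      (N.factorization π - 1) + ∑ q ∈ N.primeFactors, (q - 1).factorization π := by
  have h := Nat.totient_eq_prod_factorization hN
  rw [Finsupp.prod] at h
  have hsupp : N.factorization.support = N.primeFactors := Nat.support_factorization N
  rw [hsupp] at h
  have hne : ∀ q ∈ N.primeFactors, q ^ (N.factorization q - 1) * (q - 1) ≠ 0 := by
    intro q hq
    have hq2 : 2 ≤ q := (Nat.prime_of_mem_primeFactors hq).two_le
    exact Nat.mul_ne_zero (pow_ne_zero _ (by omega)) (by omega)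
  rw [h, Nat.factorization_prod hne, Finsupp.finset_sum_apply]
  have key : ∀ q ∈ N.primeFactors,
      (q ^ (N.factorization q - 1) * (q - 1)).factorization π
        = (if q = π then N.factorization q - 1 else 0) + (q - 1).factorization π := by
    intro q hq
    have hqp := Nat.prime_of_mem_primeFactors hq
    have h1 : (q:ℕ) - 1 ≠ 0 := by have := hqp.two_le; omega
    rw [Nat.factorization_mul (pow_ne_zero _ hqp.ne_zero) h1]
    simp only [Nat.factorization_pow, hqp.factorization, Finsupp.coe_add, Finsupp.coe_smul,
      Pi.add_apply, Pi.smul_apply, Finsupp.single_apply, smul_eq_mul]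
    split <;> simp
  rw [Finset.sum_congr rfl key, Finset.sum_add_distrib]
  congr 1
  by_cases hπ : π ∈ N.primeFactors
  · rw [Finset.sum_eq_single π (fun q hq hne' => by simp [hne']) (fun h' => absurd hπ h')]
    simp
  · have h0 : N.factorization π = 0 := by
      by_contra h'
      exact hπ ((Nat.support_factorization N) ▸ Finsupp.mem_support_iff.mpr h')
    rw [h0, Nat.zero_sub]
    apply Finset.sum_eq_zero
    intro q hq
    have hqπ : q ≠ π := by rintro rfl; exact hπ hq
    rw [if_neg hqπ]
open Nat Finset

lemma sum_cancel (π K L : ℕ) (hπ : π.Prime) (hK : K ≠ 0) (hL : L ≠ 0)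
    (h : ∀ q, q.Prime → π < q → (q ∣ K ↔ q ∣ L)) :
    ∑ q ∈ K.primeFactors, (q - 1).factorization π
      = ∑ q ∈ L.primeFactors, (q - 1).factorization π := by
  rw [← Finset.sum_filter_ne_zero K.primeFactors, ← Finset.sum_filter_ne_zero L.primeFactors]
  have hfilt : ∀ (N : ℕ), N ≠ 0 → ∀ q,
      q ∈ N.primeFactors.filter (fun q => (q - 1).factorization π ≠ 0)
        ↔ (q.Prime ∧ π < q ∧ q ∣ N ∧ (q-1).factorization π ≠ 0) := by
    intro N hN q
    simp only [Finset.mem_filter, Nat.mem_primeFactors]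
    constructor
    · rintro ⟨⟨hq, hdvd, -⟩, hf⟩
      have hπdvd : π ∣ q - 1 := Nat.dvd_of_factorization_pos hf
      have h2 : 2 ≤ q := hq.two_le
      have : π ≤ q - 1 := Nat.le_of_dvd (by omega) hπdvd
      exact ⟨hq, by omega, hdvd, hf⟩
    · rintro ⟨hq, hlt, hdvd, hf⟩
      exact ⟨⟨hq, hdvd, hN⟩, hf⟩
  apply Finset.sum_congr
  · ext q
    rw [hfilt K hK q, hfilt L hL q]
    constructor
    · rintro ⟨hq, hlt, hdvd, hf⟩
      exact ⟨hq, hlt, (h q hq hlt).mp hdvd, hf⟩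
    · rintro ⟨hq, hlt, hdvd, hf⟩
      exact ⟨hq, hlt, (h q hq hlt).mpr hdvd, hf⟩
  · intros; rfl

lemma eq_at (c d K L π : ℕ) (hπ : π.Prime) (hK : K ≠ 0) (hL : L ≠ 0) (hc : c ≠ 0) (hd : d ≠ 0)
    (heq : d * K.totient = c * L.totient)
    (hiff : ∀ q, q.Prime → π < q → (q ∣ K ↔ q ∣ L)) :
    d.factorization π + (K.factorization π - 1)
      = c.factorization π + (L.factorization π - 1) := by
  have hKt : K.totient ≠ 0 := (Nat.totient_pos.mpr (Nat.pos_of_ne_zero hK)).ne'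
  have hLt : L.totient ≠ 0 := (Nat.totient_pos.mpr (Nat.pos_of_ne_zero hL)).ne'
  have h := congrArg (fun x => x.factorization π) heq
  simp only [Nat.factorization_mul hd hKt, Nat.factorization_mul hc hLt,
    Finsupp.coe_add, Pi.add_apply] at h
  rw [phi_fact K hK π, phi_fact L hL π, sum_cancel π K L hπ hK hL hiff] at h
  omega
open Nat Finset

lemma fact_pos_iff_dvd {p n : ℕ} (hp : p.Prime) (hn : n ≠ 0) :
    0 < n.factorization p ↔ p ∣ n := by
  constructor
  · intro h; exact Nat.dvd_of_factorization_pos h.ne'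
  · intro h; exact hp.factorization_pos_of_dvd hn h

lemma descent (a b k l m n c d P : ℕ) (ha : 2 ≤ a) (hb : 2 ≤ b)
    (hk : 0 < k) (hl : 0 < l) (hm : 0 < m) (hn : 0 < n) (hc : 0 < c) (hd : 0 < d)
    (hsmall : ∀ q ∈ (c * d * k * l).primeFactors, q ≤ P)
    (heq : d * (k * m ^ a).totient = c * (l * n ^ b).totient) :
    ∀ q, q.Prime → P < q → a * m.factorization q = b * n.factorization q := by
  have hcdkl : c * d * k * l ≠ 0 := by positivity
  have hKne : k * m ^ a ≠ 0 := by positivity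
  have hLne : l * n ^ b ≠ 0 := by positivity
  have hnot : ∀ q, q.Prime → P < q → ¬ q ∣ c * d * k * l := by
    intro q hq hPq hdvd
    exact absurd (hsmall q (Nat.mem_primeFactors.mpr ⟨hq, hdvd, hcdkl⟩)) (by omega)
  have hnotk : ∀ q, q.Prime → P < q → ¬ q ∣ k := fun q hq hPq hdvd =>
    hnot q hq hPq (by exact Dvd.dvd.mul_right (hdvd.mul_left (c * d)) l)
  have hnotl : ∀ q, q.Prime → P < q → ¬ q ∣ l := fun q hq hPq hdvd =>
    hnot q hq hPq (hdvd.mul_left (c * d * k))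
  have hnotc : ∀ q, q.Prime → P < q → ¬ q ∣ c := fun q hq hPq hdvd =>
    hnot q hq hPq (by exact Dvd.dvd.mul_right (Dvd.dvd.mul_right (hdvd.mul_right d) k) l)
  have hnotd : ∀ q, q.Prime → P < q → ¬ q ∣ d := fun q hq hPq hdvd =>
    hnot q hq hPq (by exact Dvd.dvd.mul_right (Dvd.dvd.mul_right (hdvd.mul_left c) k) l)
  set M := k * l * m * n with hM
  suffices H : ∀ i q, M + 1 - q ≤ i → q.Prime → P < q →
      a * m.factorization q = b * n.factorization q by
    exact fun q hq hPq => H (M + 1) q (by omega) hq hPq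
  intro i
  induction i with
  | zero =>
    intro q h0 hq hPq
    have hmM : m ≤ M := by
      calc m ≤ k * l * m := Nat.le_mul_of_pos_left m (by positivity)
        _ ≤ k * l * m * n := Nat.le_mul_of_pos_right _ hn
    have hnM : n ≤ M := Nat.le_mul_of_pos_left n (by positivity)
    rw [Nat.factorization_eq_zero_of_lt (by omega), Nat.factorization_eq_zero_of_lt (by omega)]
    simp
  | succ i ih =>
    intro q h0 hq hPq
    have hiff : ∀ q', q'.Prime → q < q' → (q' ∣ k * m ^ a ↔ q' ∣ l * n ^ b) := by
      intro q' hq' hlt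
      have hIH : a * m.factorization q' = b * n.factorization q' :=
        ih q' (by omega) hq' (by omega)
      have hmn : q' ∣ m ↔ q' ∣ n := by
        rw [← fact_pos_iff_dvd hq' hm.ne', ← fact_pos_iff_dvd hq' hn.ne']
        constructor
        · intro h
          rcases Nat.eq_zero_or_pos (n.factorization q') with h' | h'
          · rw [h', mul_zero] at hIH
            have : a * m.factorization q' > 0 := by positivity
            omega
          · exact h'
        · intro h
          rcases Nat.eq_zero_or_pos (m.factorization q') with h' | h'
          · rw [h', mul_zero] at hIH
            have : b * n.factorization q' > 0 := by positivity
            omega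
          · exact h'
      have hma : q' ∣ m ^ a ↔ q' ∣ m :=
        ⟨fun h => hq'.dvd_of_dvd_pow h, fun h => h.trans (dvd_pow_self m (by omega))⟩
      have hnb : q' ∣ n ^ b ↔ q' ∣ n :=
        ⟨fun h => hq'.dvd_of_dvd_pow h, fun h => h.trans (dvd_pow_self n (by omega))⟩
      rw [hq'.dvd_mul, hq'.dvd_mul]
      simp only [hnotk q' hq' (by omega), hnotl q' hq' (by omega), false_or]
      rw [hma, hnb, hmn]
    have heqat := eq_at c d (k * m ^ a) (l * n ^ b) q hq hKne hLne hc.ne' hd.ne' heq hiff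
    have hcq : c.factorization q = 0 :=
      Nat.factorization_eq_zero_of_not_dvd (hnotc q hq hPq)
    have hdq : d.factorization q = 0 :=
      Nat.factorization_eq_zero_of_not_dvd (hnotd q hq hPq)
    have hkq : k.factorization q = 0 :=
      Nat.factorization_eq_zero_of_not_dvd (hnotk q hq hPq)
    have hlq : l.factorization q = 0 :=
      Nat.factorization_eq_zero_of_not_dvd (hnotl q hq hPq)
    rw [hcq, hdq, Nat.factorization_mul hk.ne' (pow_ne_zero _ hm.ne'),
        Nat.factorization_mul hl.ne' (pow_ne_zero _ hn.ne')] at heqat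
    simp only [Nat.factorization_pow, Finsupp.coe_add, Finsupp.coe_smul, Pi.add_apply,
      Pi.smul_apply, smul_eq_mul, hkq, hlq, zero_add] at heqat
    have hsx : a * m.factorization q = 0 ∨ 2 ≤ a * m.factorization q := by
      rcases Nat.eq_zero_or_pos (m.factorization q) with h | h
      · left; simp [h]
      · right; calc 2 ≤ a := ha
          _ ≤ a * m.factorization q := Nat.le_mul_of_pos_right a h
    have htx : b * n.factorization q = 0 ∨ 2 ≤ b * n.factorization q := by
      rcases Nat.eq_zero_or_pos (n.factorization q) with h | h
      · left; simp [h]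
      · right; calc 2 ≤ b := hb
          _ ≤ b * n.factorization q := Nat.le_mul_of_pos_right b h
    have key : ∀ x y : ℕ, (x = 0 ∨ 2 ≤ x) → (y = 0 ∨ 2 ≤ y) → x - 1 = y - 1 → x = y := by
      omega
    exact key _ _ hsx htx heqat
open Nat Finset

lemma extract (a b k l m n c d π : ℕ) (ha : 2 ≤ a) (hb : 2 ≤ b)
    (hk : 0 < k) (hl : 0 < l) (hm : 0 < m) (hn : 0 < n) (hc : 0 < c) (hd : 0 < d)
    (hπ : π.Prime)
    (hsmall : ∀ q ∈ (c * d * k * l).primeFactors, q ≤ π)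
    (heq : d * (k * m ^ a).totient = c * (l * n ^ b).totient) :
    d.factorization π + (k.factorization π + a * m.factorization π - 1)
      = c.factorization π + (l.factorization π + b * n.factorization π - 1) := by
  have hcdkl : c * d * k * l ≠ 0 := by positivity
  have hKne : k * m ^ a ≠ 0 := by positivity
  have hLne : l * n ^ b ≠ 0 := by positivity
  have hdesc := descent a b k l m n c d π ha hb hk hl hm hn hc hd hsmall heq
  have hnot : ∀ q, q.Prime → π < q → ¬ q ∣ c * d * k * l := by
    intro q hq hPq hdvd
    exact absurd (hsmall q (Nat.mem_primeFactors.mpr ⟨hq, hdvd, hcdkl⟩)) (by omega)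
  have hiff : ∀ q', q'.Prime → π < q' → (q' ∣ k * m ^ a ↔ q' ∣ l * n ^ b) := by
    intro q' hq' hlt
    have hIH := hdesc q' hq' hlt
    have hnotk : ¬ q' ∣ k := fun hdvd =>
      hnot q' hq' hlt (by exact Dvd.dvd.mul_right (hdvd.mul_left (c * d)) l)
    have hnotl : ¬ q' ∣ l := fun hdvd => hnot q' hq' hlt (hdvd.mul_left (c * d * k))
    have hmn : q' ∣ m ↔ q' ∣ n := by
      rw [← fact_pos_iff_dvd hq' hm.ne', ← fact_pos_iff_dvd hq' hn.ne']
      constructor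
      · intro h
        rcases Nat.eq_zero_or_pos (n.factorization q') with h' | h'
        · rw [h', mul_zero] at hIH
          have : a * m.factorization q' > 0 := by positivity
          omega
        · exact h'
      · intro h
        rcases Nat.eq_zero_or_pos (m.factorization q') with h' | h'
        · rw [h', mul_zero] at hIH
          have : b * n.factorization q' > 0 := by positivity
          omega
        · exact h'
    have hma : q' ∣ m ^ a ↔ q' ∣ m :=
      ⟨fun h => hq'.dvd_of_dvd_pow h, fun h => h.trans (dvd_pow_self m (by omega))⟩
    have hnb : q' ∣ n ^ b ↔ q' ∣ n :=
      ⟨fun h => hq'.dvd_of_dvd_pow h, fun h => h.trans (dvd_pow_self n (by omega))⟩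
    rw [hq'.dvd_mul, hq'.dvd_mul]
    simp only [hnotk, hnotl, false_or]
    rw [hma, hnb, hmn]
  have heqat := eq_at c d (k * m ^ a) (l * n ^ b) π hπ hKne hLne hc.ne' hd.ne' heq hiff
  rw [Nat.factorization_mul hk.ne' (pow_ne_zero _ hm.ne'),
      Nat.factorization_mul hl.ne' (pow_ne_zero _ hn.ne')] at heqat
  simp only [Nat.factorization_pow, Finsupp.coe_add, Finsupp.coe_smul, Pi.add_apply,
    Pi.smul_apply, smul_eq_mul] at heqat
  exact heqat
open Nat Finset

-- φ(k*N) = k*φ(N) when every prime of k divides N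
lemma phi_mul_eq : ∀ (k : ℕ), ∀ (N : ℕ), 0 < k → 0 < N →
    (∀ p, p.Prime → p ∣ k → p ∣ N) → (k * N).totient = k * N.totient := by
  intro k
  induction k using Nat.strong_induction_on with
  | _ k ih =>
    intro N hk hN hdvd
    rcases eq_or_lt_of_le (Nat.succ_le_of_lt hk) with h1 | h1
    · simp [← h1]
    · -- k ≥ 2
      have hk2 : 2 ≤ k := h1
      set p := k.minFac with hp
      have hpp : p.Prime := Nat.minFac_prime (by omega)
      have hpk : p ∣ k := Nat.minFac_dvd k
      obtain ⟨k', hk'⟩ := hpk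
      have hk'pos : 0 < k' := by
        rcases Nat.eq_zero_or_pos k' with h | h
        · subst h; simp at hk'; omega
        · exact h
      have hk'lt : k' < k := by
        have : 2 ≤ p := hpp.two_le
        nlinarith
      have hpN : p ∣ N := hdvd p hpp ⟨k', hk'⟩
      have hpk'N : p ∣ k' * N := Dvd.dvd.mul_left hpN k'
      have step : (k * N).totient = p * (k' * N).totient := by
        rw [hk', mul_assoc]
        exact Nat.totient_mul_of_prime_of_dvd hpp hpk'N
      rw [step, ih k' hk'lt N hk'pos hN (fun q hq hqk' => hdvd q hq (hk' ▸ Dvd.dvd.mul_left hqk' p)), hk']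
      ring

-- totient of product of prime powers over a finset of primes
lemma phi_prod_pow (S : Finset ℕ) (hS : ∀ p ∈ S, p.Prime) (f : ℕ → ℕ) :
    (∏ p ∈ S, p ^ f p).totient = ∏ p ∈ S, (p ^ f p).totient := by
  induction S using Finset.induction_on with
  | empty => simp
  | @insert x T hx ih =>
    have hxp : x.Prime := hS x (Finset.mem_insert_self x T)
    have hT : ∀ p ∈ T, p.Prime := fun p hp => hS p (Finset.mem_insert_of_mem hp)
    rw [Finset.prod_insert hx, Finset.prod_insert hx, ← ih hT]
    apply Nat.totient_mul
    apply Nat.Coprime.pow_left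
    apply Nat.Coprime.prod_right
    intro q hq
    exact Nat.Coprime.pow_right _ ((Nat.coprime_primes hxp (hT q hq)).mpr (by rintro rfl; exact hx hq))
open Nat Finset

lemma rat_to_nat (c d X Y : ℕ) (hd : 0 < d) (hY : 0 < Y) (h : (c:ℚ)/d = X/Y) :
    c * Y = d * X := by
  rw [div_eq_div_iff (by positivity) (by positivity)] at h
  have : (c:ℚ) * Y = d * X := by linarith
  exact_mod_cast this

lemma arith1 (a b s t : ℕ) (ha : 2 ≤ a) (hb : 2 ≤ b) (hg : Nat.gcd a b ≠ 1)
    (h : a * s - 1 = 1 + (b * t - 1)) : a = 2 := by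
  rcases Nat.eq_zero_or_pos s with hs | hs
  · rcases Nat.eq_zero_or_pos t with ht | ht
    · subst hs; subst ht; simp at h
    · have hy : 2 ≤ b * t := le_trans hb (Nat.le_mul_of_pos_right b ht)
      subst hs
      simp only [mul_zero, Nat.zero_sub] at h
      revert h hy; generalize b * t = y; intros; omega
  · have hx : 2 ≤ a * s := le_trans ha (Nat.le_mul_of_pos_right a hs)
    rcases Nat.eq_zero_or_pos t with ht | ht
    · subst ht
      simp only [mul_zero, Nat.zero_sub, add_zero] at h
      have : a * s = 2 := by revert h hx; generalize a * s = x; intros; omega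
      have ha' : a ≤ 2 := this ▸ Nat.le_mul_of_pos_right a hs
      omega
    · have hy : 2 ≤ b * t := le_trans hb (Nat.le_mul_of_pos_right b ht)
      have hsub : a * s - b * t = 1 := by
        revert h hx hy; generalize a * s = x; generalize b * t = y; intros; omega
      have hdvd : Nat.gcd a b ∣ 1 := by
        rw [← hsub]
        exact Nat.dvd_sub ((Nat.gcd_dvd_left a b).mul_right s)
          ((Nat.gcd_dvd_right a b).mul_right t)
      exact absurd (Nat.eq_one_of_dvd_one hdvd) hg
open Nat Finset

lemma exist_st (a b : ℕ) (ha : 0 < a) (hb : 0 < b) (hg : Nat.gcd a b = 1) (e : ℤ) :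
    ∃ s t : ℕ, 0 < s ∧ 0 < t ∧ (a:ℤ) * s - (b:ℤ) * t = e := by
  have hbez : (1:ℤ) = a * Nat.gcdA a b + b * Nat.gcdB a b := by
    have := Nat.gcd_eq_gcd_ab a b
    rw [hg] at this; exact_mod_cast this
  set x := e * Nat.gcdA a b with hx
  set y := -(e * Nat.gcdB a b) with hy
  have hkey : (a:ℤ) * x - (b:ℤ) * y = e := by
    rw [hx, hy]
    have : (a:ℤ) * (e * Nat.gcdA a b) + (b:ℤ) * (e * Nat.gcdB a b)
        = e * ((a:ℤ) * Nat.gcdA a b + (b:ℤ) * Nat.gcdB a b) := by ring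
    have h2 : (a:ℤ) * Nat.gcdA a b + (b:ℤ) * Nat.gcdB a b = 1 := hbez.symm
    have h3 : (a:ℤ) * (e * Nat.gcdA a b) - (b:ℤ) * -(e * Nat.gcdB a b)
        = e * ((a:ℤ) * Nat.gcdA a b + (b:ℤ) * Nat.gcdB a b) := by ring
    rw [h3, h2, mul_one]
  set M : ℤ := x.natAbs + y.natAbs + 1 with hM
  have hMx : 0 < x + (b:ℤ) * M := by
    have hb1 : (1:ℤ) ≤ (b:ℤ) := by exact_mod_cast hb
    have h1 : (M:ℤ) ≤ (b:ℤ) * M := le_mul_of_one_le_left (by positivity) hb1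
    have h2 : -x ≤ x.natAbs := by
      rcases Int.natAbs_eq x with h | h <;> omega
    omega
  have hMy : 0 < y + (a:ℤ) * M := by
    have ha1 : (1:ℤ) ≤ (a:ℤ) := by exact_mod_cast ha
    have h1 : (M:ℤ) ≤ (a:ℤ) * M := le_mul_of_one_le_left (by positivity) ha1
    have h2 : -y ≤ y.natAbs := by
      rcases Int.natAbs_eq y with h | h <;> omega
    omega
  refine ⟨(x + (b:ℤ) * M).toNat, (y + (a:ℤ) * M).toNat, by omega, by omega, ?_⟩
  rw [Int.toNat_of_nonneg hMx.le, Int.toNat_of_nonneg hMy.le]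
  ring_nf
  ring_nf at hkey
  linarith
open Nat Finset

lemma prod_pow_fact_superset (A : ℕ) (hA : A ≠ 0) (S : Finset ℕ)
    (hsub : A.primeFactors ⊆ S) : ∏ p ∈ S, p ^ A.factorization p = A := by
  conv_rhs => rw [← Nat.factorization_prod_pow_eq_self hA]
  rw [Finsupp.prod]
  rw [Nat.support_factorization]
  exact (Finset.prod_subset hsub (fun p _ hp => by
    have : A.factorization p = 0 := by
      by_contra h
      exact hp ((Nat.support_factorization A) ▸ Finsupp.mem_support_iff.mpr h)
    simp [this])).symm

lemma suff_coprime (k l a b : ℕ) (hk : 0 < k) (hl : 0 < l) (ha : 0 < a) (hb : 0 < b)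
    (hg : Nat.gcd a b = 1) (r : ℚ) (hr : 0 < r) :
    ∃ m n : ℕ, 0 < m ∧ 0 < n ∧
      r = ((k * m ^ a).totient : ℚ) / ((l * n ^ b).totient : ℚ) := by
  have hkQ : (k:ℚ) ≠ 0 := by positivity
  have hlQ : (l:ℚ) ≠ 0 := by positivity
  set c : ℚ := r * l / k with hc
  have hcpos : 0 < c := by positivity
  set A := c.num.toNat with hAdef
  set B := c.den with hBdef
  have hA : 0 < A := by
    have h0 : 0 < c.num := Rat.num_pos.mpr hcpos
    rw [hAdef]; omega
  have hB : 0 < B := c.pos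
  have hAB : (A:ℚ) / B = c := by
    have h1 : ((A:ℤ):ℚ) = (c.num:ℚ) := by
      rw [hAdef, Int.toNat_of_nonneg (Rat.num_pos.mpr hcpos).le]
    calc (A:ℚ)/B = (c.num:ℚ)/(c.den:ℚ) := by rw [← h1]; norm_num; rfl
      _ = c := Rat.num_div_den c
  set N₀ := A * B * k * l with hN₀def
  have hN₀ : N₀ ≠ 0 := by positivity
  set S := N₀.primeFactors with hSdef
  have hSp : ∀ p ∈ S, p.Prime := fun p hp => Nat.prime_of_mem_primeFactors hp
  set e : ℕ → ℤ := fun p => (A.factorization p : ℤ) - (B.factorization p : ℤ) with he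
  choose s t hs ht hst using fun p => exist_st a b ha hb hg (e p)
  set m := ∏ p ∈ S, p ^ s p with hm
  set n := ∏ p ∈ S, p ^ t p with hn
  have hppos : ∀ p ∈ S, 0 < p := fun p hp => (hSp p hp).pos
  have hmpos : 0 < m := Finset.prod_pos (fun p hp => pow_pos (hppos p hp) _)
  have hnpos : 0 < n := Finset.prod_pos (fun p hp => pow_pos (hppos p hp) _)
  have hdvdm : ∀ p ∈ S, p ∣ m := fun p hp =>
    dvd_trans (dvd_pow_self p (hs p).ne') (Finset.dvd_prod_of_mem _ hp)
  have hdvdn : ∀ p ∈ S, p ∣ n := fun p hp =>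
    dvd_trans (dvd_pow_self p (ht p).ne') (Finset.dvd_prod_of_mem _ hp)
  -- membership of prime divisors of k, l in S
  have hkS : ∀ p, p.Prime → p ∣ k → p ∈ S := fun p hp hdvd =>
    Nat.mem_primeFactors.mpr ⟨hp, by exact Dvd.dvd.mul_right (hdvd.mul_left (A*B)) l, hN₀⟩
  have hlS : ∀ p, p.Prime → p ∣ l → p ∈ S := fun p hp hdvd =>
    Nat.mem_primeFactors.mpr ⟨hp, hdvd.mul_left (A*B*k), hN₀⟩
  -- totient computations
  have hmA : m ^ a = ∏ p ∈ S, p ^ (a * s p) := by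
    rw [hm, ← Finset.prod_pow]
    exact Finset.prod_congr rfl (fun p hp => by rw [← pow_mul, mul_comm (s p) a])
  have hnB : n ^ b = ∏ p ∈ S, p ^ (b * t p) := by
    rw [hn, ← Finset.prod_pow]
    exact Finset.prod_congr rfl (fun p hp => by rw [← pow_mul, mul_comm (t p) b])
  have hX : (k * m ^ a).totient = k * ∏ p ∈ S, (p ^ (a * s p - 1) * (p - 1)) := by
    rw [phi_mul_eq k (m ^ a) hk (by positivity)
      (fun p hp hdvd => dvd_trans (hdvdm p (hkS p hp hdvd)) (dvd_pow_self m ha.ne'))]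
    congr 1
    rw [hmA, phi_prod_pow S hSp]
    exact Finset.prod_congr rfl (fun p hp => by
      rw [Nat.totient_prime_pow (hSp p hp) (Nat.mul_pos ha (hs p))])
  have hY : (l * n ^ b).totient = l * ∏ p ∈ S, (p ^ (b * t p - 1) * (p - 1)) := by
    rw [phi_mul_eq l (n ^ b) hl (by positivity)
      (fun p hp hdvd => dvd_trans (hdvdn p (hlS p hp hdvd)) (dvd_pow_self n hb.ne'))]
    congr 1
    rw [hnB, phi_prod_pow S hSp]
    exact Finset.prod_congr rfl (fun p hp => by
      rw [Nat.totient_prime_pow (hSp p hp) (Nat.mul_pos hb (ht p))])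
  refine ⟨m, n, hmpos, hnpos, ?_⟩
  rw [hX, hY]
  -- cast products
  have hcastX : ((k * ∏ p ∈ S, (p ^ (a * s p - 1) * (p - 1)) : ℕ) : ℚ)
      = (k:ℚ) * ∏ p ∈ S, ((p:ℚ) ^ (a * s p - 1) * ((p:ℚ) - 1)) := by
    rw [Nat.cast_mul, Nat.cast_prod]
    congr 1
    exact Finset.prod_congr rfl (fun p hp => by
      rw [Nat.cast_mul, Nat.cast_pow, Nat.cast_sub (hSp p hp).one_le, Nat.cast_one])
  have hcastY : ((l * ∏ p ∈ S, (p ^ (b * t p - 1) * (p - 1)) : ℕ) : ℚ)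
      = (l:ℚ) * ∏ p ∈ S, ((p:ℚ) ^ (b * t p - 1) * ((p:ℚ) - 1)) := by
    rw [Nat.cast_mul, Nat.cast_prod]
    congr 1
    exact Finset.prod_congr rfl (fun p hp => by
      rw [Nat.cast_mul, Nat.cast_pow, Nat.cast_sub (hSp p hp).one_le, Nat.cast_one])
  rw [hcastX, hcastY]
  -- ratio of the products
  have hratio : (∏ p ∈ S, ((p:ℚ) ^ (a * s p - 1) * ((p:ℚ) - 1)))
      / (∏ p ∈ S, ((p:ℚ) ^ (b * t p - 1) * ((p:ℚ) - 1)))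
      = ∏ p ∈ S, (p:ℚ) ^ (e p) := by
    rw [← Finset.prod_div_distrib]
    exact Finset.prod_congr rfl (fun p hp => by
      have hp2 : 2 ≤ p := (hSp p hp).two_le
      have hp0 : (p:ℚ) ≠ 0 := by positivity
      have hp1 : (p:ℚ) - 1 ≠ 0 := by
        have : (2:ℚ) ≤ (p:ℚ) := by exact_mod_cast hp2
        linarith
      rw [mul_div_mul_right _ _ hp1]
      rw [← zpow_natCast (p:ℚ) (a * s p - 1), ← zpow_natCast (p:ℚ) (b * t p - 1),
        ← zpow_sub₀ hp0]
      congr 1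
      have h1 : 1 ≤ a * s p := Nat.mul_pos ha (hs p)
      have h2 : 1 ≤ b * t p := Nat.mul_pos hb (ht p)
      have := hst p
      push_cast [Nat.cast_sub h1, Nat.cast_sub h2]
      push_cast at this
      linarith)
  have hprodA : ∏ p ∈ S, (p:ℚ) ^ (e p) = (A:ℚ) / (B:ℚ) := by
    have hsubA : A.primeFactors ⊆ S :=
      Nat.primeFactors_mono (by exact Dvd.dvd.mul_right (Dvd.dvd.mul_right (dvd_mul_right A B) k) l) hN₀
    have hsubB : B.primeFactors ⊆ S :=
      Nat.primeFactors_mono (by exact Dvd.dvd.mul_right (Dvd.dvd.mul_right (dvd_mul_left B A) k) l) hN₀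
    have hprodnatA : ((∏ p ∈ S, p ^ A.factorization p : ℕ) : ℚ) = (A:ℚ) := by
      rw [prod_pow_fact_superset A hA.ne' S hsubA]
    have hprodnatB : ((∏ p ∈ S, p ^ B.factorization p : ℕ) : ℚ) = (B:ℚ) := by
      rw [prod_pow_fact_superset B hB.ne' S hsubB]
    calc ∏ p ∈ S, (p:ℚ) ^ (e p)
        = ∏ p ∈ S, ((p:ℚ) ^ (A.factorization p : ℤ) / (p:ℚ) ^ (B.factorization p : ℤ)) := by
          exact Finset.prod_congr rfl (fun p hp => by
            have hp0 : (p:ℚ) ≠ 0 := by have := (hSp p hp).pos; positivity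
            rw [he, zpow_sub₀ hp0])
      _ = (∏ p ∈ S, (p:ℚ) ^ (A.factorization p : ℤ))
            / (∏ p ∈ S, (p:ℚ) ^ (B.factorization p : ℤ)) := Finset.prod_div_distrib ..
      _ = (A:ℚ) / (B:ℚ) := by
          rw [← hprodnatA, ← hprodnatB, Nat.cast_prod, Nat.cast_prod]
          congr 1 <;> exact Finset.prod_congr rfl (fun p hp => by
            rw [zpow_natCast, Nat.cast_pow])
  -- final computation
  have hPYpos : 0 < ∏ p ∈ S, ((p:ℚ) ^ (b * t p - 1) * ((p:ℚ) - 1)) := by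
    apply Finset.prod_pos
    intro p hp
    have hp2 : (2:ℚ) ≤ (p:ℚ) := by exact_mod_cast (hSp p hp).two_le
    have h1 : (0:ℚ) < (p:ℚ) - 1 := by linarith
    have h2 : (0:ℚ) < (p:ℚ) ^ (b * t p - 1) := by positivity
    exact mul_pos h2 h1
  have hPX : (∏ p ∈ S, ((p:ℚ) ^ (a * s p - 1) * ((p:ℚ) - 1)))
      = ((A:ℚ)/(B:ℚ)) * ∏ p ∈ S, ((p:ℚ) ^ (b * t p - 1) * ((p:ℚ) - 1)) := by
    rw [← hprodA, ← hratio, div_mul_cancel₀]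
    exact hPYpos.ne'
  rw [eq_div_iff (by positivity)]
  rw [hPX, hAB, hc]
  field_simp
open Nat Finset

lemma apply_rep (k l a b : ℕ) (hk : 0 < k) (hl : 0 < l) (ha2 : 2 ≤ a) (hb2 : 2 ≤ b)
    (π j e : ℕ) (hπ : π.Prime) (hklπ : ∀ q ∈ (k*l).primeFactors, q ≤ π)
    (H : ∀ r : ℚ, 0 < r → ∃ m n : ℕ, 0 < m ∧ 0 < n ∧
        r = (Nat.totient (k * m ^ a) : ℚ) / (Nat.totient (l * n ^ b) : ℚ)) :
    ∃ s t : ℕ, e + (k.factorization π + a * s - 1)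
      = j + (l.factorization π + b * t - 1) := by
  have hπpos : (0:ℕ) < π := hπ.pos
  have hr : (0:ℚ) < (π ^ j : ℕ) / (π ^ e : ℕ) := by
    have h1 : (0:ℚ) < ((π ^ j : ℕ) : ℚ) := by exact_mod_cast pow_pos hπpos j
    have h2 : (0:ℚ) < ((π ^ e : ℕ) : ℚ) := by exact_mod_cast pow_pos hπpos e
    positivity
  obtain ⟨m, n, hm, hn, heqQ⟩ := H _ hr
  have hX : 0 < (k * m ^ a).totient := Nat.totient_pos.mpr (by positivity)
  have hY : 0 < (l * n ^ b).totient := Nat.totient_pos.mpr (by positivity)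
  have hnat : π ^ j * (l * n ^ b).totient = π ^ e * (k * m ^ a).totient := by
    apply rat_to_nat _ _ _ _ (pow_pos hπpos e) hY
    rw [← heqQ]
  have hsmall : ∀ q ∈ (π ^ j * π ^ e * k * l).primeFactors, q ≤ π := by
    intro q hq
    obtain ⟨hqp, hqdvd, -⟩ := Nat.mem_primeFactors.mp hq
    have : q ∣ π ^ (j + e) * (k * l) := by
      rw [pow_add]; convert hqdvd using 1; ring
    rcases (hqp.dvd_mul).mp this with h | h
    · have : q ∣ π := hqp.dvd_of_dvd_pow h
      rw [(Nat.prime_dvd_prime_iff_eq hqp hπ).mp this]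
    · exact hklπ q (Nat.mem_primeFactors.mpr ⟨hqp, h, by positivity⟩)
  have heq : π ^ e * (k * m ^ a).totient = π ^ j * (l * n ^ b).totient := hnat.symm
  have hext := extract a b k l m n (π ^ j) (π ^ e) π ha2 hb2 hk hl hm hn
    (pow_pos hπpos j) (pow_pos hπpos e) hπ hsmall heq
  refine ⟨m.factorization π, n.factorization π, ?_⟩
  rwa [hπ.factorization_pow, hπ.factorization_pow, Finsupp.single_eq_same,
    Finsupp.single_eq_same] at hext

lemma necessity (k l a b : ℕ) (hk : 0 < k) (hl : 0 < l) (ha : 0 < a) (hb : 0 < b)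
    (hg : Nat.gcd a b ≠ 1)
    (H : ∀ r : ℚ, 0 < r → ∃ m n : ℕ, 0 < m ∧ 0 < n ∧
        r = (Nat.totient (k * m ^ a) : ℚ) / (Nat.totient (l * n ^ b) : ℚ)) :
    a = 2 ∧ b = 2 ∧ k = 1 ∧ l = 1 := by
  have hgpos : 0 < Nat.gcd a b := Nat.gcd_pos_of_pos_left b ha
  have hg2 : 2 ≤ Nat.gcd a b := by omega
  have ha2 : 2 ≤ a := le_trans hg2 (Nat.le_of_dvd ha (Nat.gcd_dvd_left a b))
  have hb2 : 2 ≤ b := le_trans hg2 (Nat.le_of_dvd hb (Nat.gcd_dvd_right a b))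
  obtain ⟨P, hPge, hPp⟩ := Nat.exists_infinite_primes (k * l + 1)
  have hklpos : 0 < k * l := by positivity
  have hklP : ∀ q ∈ (k*l).primeFactors, q ≤ P := by
    intro q hq
    have := Nat.le_of_dvd hklpos (Nat.mem_primeFactors.mp hq).2.1
    omega
  have hkP : k.factorization P = 0 :=
    Nat.factorization_eq_zero_of_lt (by calc k ≤ k * l := Nat.le_mul_of_pos_right k hl
                                          _ < P := by omega)
  have hlP : l.factorization P = 0 :=
    Nat.factorization_eq_zero_of_lt (by calc l ≤ k * l := Nat.le_mul_of_pos_left l hk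
                                          _ < P := by omega)
  -- a = 2
  obtain ⟨s, t, h1⟩ := apply_rep k l a b hk hl ha2 hb2 P 1 0 hPp hklP H
  rw [hkP, hlP, zero_add, zero_add, zero_add] at h1
  have hA : a = 2 := arith1 a b s t ha2 hb2 hg h1
  -- b = 2
  obtain ⟨s', t', h2⟩ := apply_rep k l a b hk hl ha2 hb2 P 0 1 hPp hklP H
  rw [hkP, hlP, zero_add, zero_add, zero_add] at h2
  have hB : b = 2 := arith1 b a t' s' hb2 ha2 (by rwa [Nat.gcd_comm]) h2.symm
  refine ⟨hA, hB, ?_⟩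
  -- k = l = 1
  by_contra hkl
  have hkl2 : 2 ≤ k * l := by
    rcases Nat.lt_or_ge (k * l) 2 with h | h
    · exfalso; apply hkl
      have : k = 1 ∧ l = 1 := by
        constructor <;> nlinarith
      omega
    · exact h
  have hne : (k * l).primeFactors.Nonempty :=
    Nat.nonempty_primeFactors.mpr hkl2
  set P' := (k * l).primeFactors.max' hne with hP'def
  have hP'mem : P' ∈ (k * l).primeFactors := Finset.max'_mem _ hne
  have hP'p : P'.Prime := Nat.prime_of_mem_primeFactors hP'mem
  have hklP' : ∀ q ∈ (k*l).primeFactors, q ≤ P' := fun q hq => Finset.le_max' _ q hq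
  set α := k.factorization P' with hα
  set β := l.factorization P' with hβ
  have hαβ : 0 < α ∨ 0 < β := by
    rcases (hP'p.dvd_mul).mp (Nat.mem_primeFactors.mp hP'mem).2.1 with h | h
    · left; exact (fact_pos_iff_dvd hP'p hk.ne').mpr h
    · right; exact (fact_pos_iff_dvd hP'p hl.ne').mpr h
  subst hA; subst hB
  have rep := fun (j e : ℕ) => apply_rep k l 2 2 hk hl le_rfl le_rfl P' j e hP'p hklP' H
  rcases hαβ with hα1 | hβ1
  · rcases Nat.eq_zero_or_pos β with hβ0 | hβ1
    · -- α ≥ 1, β = 0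
      rcases Nat.lt_or_ge α 3 with hα3 | hα3
      · obtain ⟨s, t, h⟩ := rep 0 (3 - α)
        omega
      · obtain ⟨s, t, h⟩ := rep (α - 3) 0
        omega
    · -- α ≥ 1, β ≥ 1
      rcases le_or_gt β α with hle | hlt
      · obtain ⟨s, t, h⟩ := rep (α - β + 1) 0
        omega
      · obtain ⟨s, t, h⟩ := rep 0 (β - α - 1)
        omega
  · rcases Nat.eq_zero_or_pos α with hα0 | hα1
    · -- β ≥ 1, α = 0
      rcases Nat.lt_or_ge β 3 with hβ3 | hβ3
      · obtain ⟨s, t, h⟩ := rep (3 - β) 0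
        omega
      · obtain ⟨s, t, h⟩ := rep 0 (β - 3)
        omega
    · rcases le_or_gt β α with hle | hlt
      · obtain ⟨s, t, h⟩ := rep (α - β + 1) 0
        omega
      · obtain ⟨s, t, h⟩ := rep 0 (β - α - 1)
        omega
open Nat Finset

lemma KP : ∀ B : ℕ, ∀ c d : ℕ, 0 < c → 0 < d → (∀ p ∈ (c * d).primeFactors, p ≤ B) →
    ∃ m n : ℕ, 0 < m ∧ 0 < n ∧ (∀ p ∈ (m * n).primeFactors, p ≤ B) ∧
      d * (m ^ 2).totient = c * (n ^ 2).totient := by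
  intro B
  induction B using Nat.strong_induction_on with
  | _ B ih =>
    have step : ∀ c d : ℕ, 0 < c → 0 < d →
        ∀ p, p.Prime → p ≤ B → (∀ q ∈ (c * d).primeFactors, q ≤ p) → p ∣ c * d →
        d.factorization p ≤ c.factorization p →
        ∃ m n : ℕ, 0 < m ∧ 0 < n ∧ (∀ q ∈ (m * n).primeFactors, q ≤ B) ∧
          d * (m ^ 2).totient = c * (n ^ 2).totient := by
      intro c d hc hd p hp hpB hmax hpdvd hδγ
      set γ := c.factorization p with hγ
      set δ := d.factorization p with hδ
      set c₀ := c / p ^ γ with hc₀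
      set d₀ := d / p ^ δ with hd₀
      have hc₀pos : 0 < c₀ := Nat.ordCompl_pos p hc.ne'
      have hd₀pos : 0 < d₀ := Nat.ordCompl_pos p hd.ne'
      have hcsplit : p ^ γ * c₀ = c := Nat.ordProj_mul_ordCompl_eq_self c p
      have hdsplit : p ^ δ * d₀ = d := Nat.ordProj_mul_ordCompl_eq_self d p
      have hpc₀ : ¬ p ∣ c₀ := Nat.not_dvd_ordCompl hp hc.ne'
      have hpd₀ : ¬ p ∣ d₀ := Nat.not_dvd_ordCompl hp hd.ne'
      have hp2 : 2 ≤ p := hp.two_le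
      have hp1pos : 0 < p - 1 := by omega
      have hsmall : ∀ x : ℕ, x ∣ c₀ * d₀ * (p - 1) →
          (∀ q ∈ x.primeFactors, q ≤ p - 1) := by
        intro x hxdvd q hq
        obtain ⟨hqp, hqdvd, -⟩ := Nat.mem_primeFactors.mp hq
        have hqx : q ∣ c₀ * d₀ * (p - 1) := hqdvd.trans hxdvd
        rcases hqp.dvd_mul.mp hqx with h | h
        · have hqcd : q ∣ c * d := by
            rcases hqp.dvd_mul.mp h with h' | h'
            · exact Dvd.dvd.mul_right (h'.trans (Nat.ordCompl_dvd c p)) d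
            · exact (h'.trans (Nat.ordCompl_dvd d p)).mul_left c
          have hqle : q ≤ p := hmax q (Nat.mem_primeFactors.mpr ⟨hqp, hqcd, by positivity⟩)
          have hqnep : q ≠ p := by
            rintro rfl
            rcases hqp.dvd_mul.mp h with h' | h'
            · exact hpc₀ h'
            · exact hpd₀ h'
          omega
        · exact Nat.le_of_dvd hp1pos h
      have hγpos : 0 < γ := by
        rcases (hp.dvd_mul.mp hpdvd) with h | h
        · exact (fact_pos_iff_dvd hp hc.ne').mpr h
        · exact lt_of_lt_of_le ((fact_pos_iff_dvd hp hd.ne').mpr h) hδγ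
      rcases Nat.even_or_odd (γ - δ) with ⟨u, hu⟩ | ⟨u, hu⟩
      · -- even case : γ = δ + 2u
        have hγeq : γ = δ + (u + u) := by omega
        obtain ⟨m₀, n₀, hm₀, hn₀, hbound₀, heq₀⟩ :=
          ih (p - 1) (by omega) c₀ d₀ hc₀pos hd₀pos
            (hsmall (c₀ * d₀) (dvd_mul_right _ _))
        have hm₀n₀ : m₀ * n₀ ≠ 0 := by positivity
        have hpm₀ : ¬ p ∣ m₀ := by
          intro h
          have := hbound₀ p (Nat.mem_primeFactors.mpr ⟨hp, h.mul_right n₀, hm₀n₀⟩)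
          omega
        have hpn₀ : ¬ p ∣ n₀ := by
          intro h
          have := hbound₀ p (Nat.mem_primeFactors.mpr ⟨hp, h.mul_left m₀, hm₀n₀⟩)
          omega
        refine ⟨p ^ (u + 1) * m₀, p * n₀, by positivity, by positivity, ?_, ?_⟩
        · intro q hq
          obtain ⟨hqp, hqdvd, -⟩ := Nat.mem_primeFactors.mp hq
          have hre : p ^ (u + 1) * m₀ * (p * n₀) = p ^ (u + 2) * (m₀ * n₀) := by ring
          rw [hre] at hqdvd
          rcases hqp.dvd_mul.mp hqdvd with h | h
          · have : q = p := (Nat.prime_dvd_prime_iff_eq hqp hp).mp (hqp.dvd_of_dvd_pow h)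
            omega
          · have := hbound₀ q (Nat.mem_primeFactors.mpr ⟨hqp, h, hm₀n₀⟩)
            omega
        · have hcopm : Nat.Coprime (p ^ (2 * (u + 1))) (m₀ ^ 2) :=
            Nat.Coprime.pow _ _ (hp.coprime_iff_not_dvd.mpr hpm₀)
          have hcopn : Nat.Coprime (p ^ 2) (n₀ ^ 2) :=
            Nat.Coprime.pow _ _ (hp.coprime_iff_not_dvd.mpr hpn₀)
          have hm2 : (p ^ (u + 1) * m₀) ^ 2 = p ^ (2 * (u + 1)) * m₀ ^ 2 := by ring
          have hn2 : (p * n₀) ^ 2 = p ^ 2 * n₀ ^ 2 := by ring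
          have hexp : 2 * (u + 1) - 1 = 2 * u + 1 := by omega
          have hφm : ((p ^ (u + 1) * m₀) ^ 2).totient
              = p ^ (2 * u + 1) * (p - 1) * (m₀ ^ 2).totient := by
            rw [hm2, Nat.totient_mul hcopm, Nat.totient_prime_pow hp (by omega), hexp]
          have hφn : ((p * n₀) ^ 2).totient = p * (p - 1) * (n₀ ^ 2).totient := by
            rw [hn2, Nat.totient_mul hcopn, Nat.totient_prime_pow hp (by omega)]
            norm_num
          rw [hφm, hφn, ← hcsplit, ← hdsplit, hγeq]
          calc p ^ δ * d₀ * (p ^ (2 * u + 1) * (p - 1) * (m₀ ^ 2).totient)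
              = p ^ δ * p ^ (2 * u + 1) * (p - 1) * (d₀ * (m₀ ^ 2).totient) := by ring
            _ = p ^ δ * p ^ (2 * u + 1) * (p - 1) * (c₀ * (n₀ ^ 2).totient) := by rw [heq₀]
            _ = p ^ (δ + (u + u)) * c₀ * (p * (p - 1) * (n₀ ^ 2).totient) := by ring
      · -- odd case : γ = δ + 2u + 1
        have hγeq : γ = δ + (2 * u + 1) := by omega
        obtain ⟨m₀, n₀, hm₀, hn₀, hbound₀, heq₀⟩ :=
          ih (p - 1) (by omega) c₀ (d₀ * (p - 1)) hc₀pos (by positivity)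
            (hsmall (c₀ * (d₀ * (p - 1))) (dvd_of_eq (by ring)))
        have hm₀n₀ : m₀ * n₀ ≠ 0 := by positivity
        have hpm₀ : ¬ p ∣ m₀ := by
          intro h
          have := hbound₀ p (Nat.mem_primeFactors.mpr ⟨hp, h.mul_right n₀, hm₀n₀⟩)
          omega
        refine ⟨p ^ (u + 1) * m₀, n₀, by positivity, hn₀, ?_, ?_⟩
        · intro q hq
          obtain ⟨hqp, hqdvd, -⟩ := Nat.mem_primeFactors.mp hq
          have hre : p ^ (u + 1) * m₀ * n₀ = p ^ (u + 1) * (m₀ * n₀) := by ring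
          rw [hre] at hqdvd
          rcases hqp.dvd_mul.mp hqdvd with h | h
          · have : q = p := (Nat.prime_dvd_prime_iff_eq hqp hp).mp (hqp.dvd_of_dvd_pow h)
            omega
          · have := hbound₀ q (Nat.mem_primeFactors.mpr ⟨hqp, h, hm₀n₀⟩)
            omega
        · have hcopm : Nat.Coprime (p ^ (2 * (u + 1))) (m₀ ^ 2) :=
            Nat.Coprime.pow _ _ (hp.coprime_iff_not_dvd.mpr hpm₀)
          have hm2 : (p ^ (u + 1) * m₀) ^ 2 = p ^ (2 * (u + 1)) * m₀ ^ 2 := by ring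
          have hexp : 2 * (u + 1) - 1 = 2 * u + 1 := by omega
          have hφm : ((p ^ (u + 1) * m₀) ^ 2).totient
              = p ^ (2 * u + 1) * (p - 1) * (m₀ ^ 2).totient := by
            rw [hm2, Nat.totient_mul hcopm, Nat.totient_prime_pow hp (by omega), hexp]
          rw [hφm, ← hcsplit, ← hdsplit, hγeq]
          calc p ^ δ * d₀ * (p ^ (2 * u + 1) * (p - 1) * (m₀ ^ 2).totient)
              = p ^ δ * p ^ (2 * u + 1) * (d₀ * (p - 1) * (m₀ ^ 2).totient) := by ring
            _ = p ^ δ * p ^ (2 * u + 1) * (c₀ * (n₀ ^ 2).totient) := by rw [heq₀]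
            _ = p ^ (δ + (2 * u + 1)) * c₀ * (n₀ ^ 2).totient := by ring
    intro c d hc hd hB
    rcases Nat.lt_or_ge (c * d) 2 with h2 | h2
    · have hc1 : c = 1 := by nlinarith
      have hd1 : d = 1 := by nlinarith
      exact ⟨1, 1, one_pos, one_pos, by simp, by rw [hc1, hd1]⟩
    · have hne : (c * d).primeFactors.Nonempty := Nat.nonempty_primeFactors.mpr h2
      set p := (c * d).primeFactors.max' hne with hpdef
      have hpmem : p ∈ (c * d).primeFactors := Finset.max'_mem _ hne
      have hpp : p.Prime := Nat.prime_of_mem_primeFactors hpmem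
      have hpB : p ≤ B := hB p hpmem
      have hmax : ∀ q ∈ (c * d).primeFactors, q ≤ p := fun q hq => Finset.le_max' _ q hq
      have hpdvd : p ∣ c * d := (Nat.mem_primeFactors.mp hpmem).2.1
      rcases le_total (d.factorization p) (c.factorization p) with hle | hle
      · exact step c d hc hd p hpp hpB hmax hpdvd hle
      · obtain ⟨m', n', hm', hn', hbound', heq'⟩ :=
          step d c hd hc p hpp hpB
            (by rw [mul_comm]; exact hmax) (by rwa [mul_comm]) hle
        exact ⟨n', m', hn', hm', by rw [mul_comm]; exact hbound', heq'.symm⟩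
open Nat Finset

theorem stmt_2 (k l a b : ℕ) (hk : 0 < k) (hl : 0 < l) (ha : 0 < a) (hb : 0 < b)
    (hmax : 2 ≤ max a b) :
    (∀ r : ℚ, 0 < r → ∃ m n : ℕ, 0 < m ∧ 0 < n ∧
        r = (Nat.totient (k * m ^ a) : ℚ) / (Nat.totient (l * n ^ b) : ℚ)) ↔
      (Nat.gcd a b = 1 ∨ (a = 2 ∧ b = 2 ∧ k = 1 ∧ l = 1)) := by
  constructor
  · intro H
    by_cases hg : Nat.gcd a b = 1
    · exact Or.inl hg
    · exact Or.inr (necessity k l a b hk hl ha hb hg H)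
  · rintro (hg | ⟨rfl, rfl, rfl, rfl⟩)
    · intro r hr
      exact suff_coprime k l a b hk hl ha hb hg r hr
    · intro r hr
      set c := r.num.toNat with hcdef
      set d := r.den with hddef
      have hnum : 0 < r.num := Rat.num_pos.mpr hr
      have hc : 0 < c := by rw [hcdef]; omega
      have hd : 0 < d := r.pos
      obtain ⟨m, n, hm, hn, hbound, heq⟩ := KP (c * d) c d hc hd
        (fun p hp => Nat.le_of_dvd (by positivity) (Nat.mem_primeFactors.mp hp).2.1)
      refine ⟨m, n, hm, hn, ?_⟩
      have hX : 0 < (m ^ 2).totient := Nat.totient_pos.mpr (by positivity)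
      have hY : 0 < (n ^ 2).totient := Nat.totient_pos.mpr (by positivity)
      have hrcd : r = (c : ℚ) / (d : ℚ) := by
        have h1 : ((c:ℤ):ℚ) = (r.num : ℚ) := by
          rw [hcdef, Int.toNat_of_nonneg hnum.le]
        calc r = (r.num : ℚ) / (r.den : ℚ) := (Rat.num_div_den r).symm
          _ = (c : ℚ) / (d : ℚ) := by rw [← h1]; norm_num; rfl
      rw [hrcd, one_mul, one_mul]
      rw [div_eq_div_iff (by positivity) (by positivity)]
      exact_mod_cast heq.symm.trans (mul_comm d ((m ^ 2).totient))
end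

section
/- Let k, l, a and b be positive integers with μ := gcd(a, b) > 2, let p be a prime with p > P(k·l), and let t be a positive integer with t ≡ 1 (mod μ). Then there are no positive integers m and n with p^t = φ(k·m^a)/φ(l·n^b). -/
/-- The largest prime factor of `n`, with the convention that it is `1`
when `n` has no prime factors (in particular `P(1) = 1`). -/
def maxPrimeFac (n : ℕ) : ℕ := WithBot.unbotD 1 n.primeFactors.max

private lemma maxPrimeFac_spec {N : ℕ} (h : N.primeFactors.Nonempty) :
    maxPrimeFac N ∈ N.primeFactors ∧ ∀ r ∈ N.primeFactors, r ≤ maxPrimeFac N := by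
  have hmax : N.primeFactors.max = (N.primeFactors.max' h : ℕ) := (Finset.coe_max' h).symm
  have : maxPrimeFac N = N.primeFactors.max' h := by
    rw [maxPrimeFac, hmax]; rfl
  rw [this]
  exact ⟨Finset.max'_mem _ h, fun r hr => Finset.le_max' _ r hr⟩

private lemma not_dvd_totient {q N : ℕ} (hq : q.Prime) (hN : N ≠ 0)
    (h : ∀ r ∈ N.primeFactors, r < q) : ¬ q ∣ N.totient := by
  intro hdvd
  rw [Nat.totient_eq_prod_factorization hN, Finsupp.prod] at hdvd
  obtain ⟨r, hr, hqr⟩ := hq.prime.exists_mem_finset_dvd hdvd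
  have hrmem : r ∈ N.primeFactors := by rwa [Nat.support_factorization] at hr
  have hrq := h r hrmem
  have hrp : r.Prime := Nat.prime_of_mem_primeFactors hrmem
  rcases (Nat.Prime.dvd_mul hq).1 hqr with h1 | h2
  · have hqr' : q ∣ r := Nat.Prime.dvd_of_dvd_pow hq h1
    have : q = r := (Nat.prime_dvd_prime_iff_eq hq hrp).1 hqr'
    omega
  · have h2le := Nat.le_of_dvd (by have := hrp.two_le; omega) h2
    omega

/-- `q`-adic valuation of `φ(q^e)` is `e - 1` (truncated subtraction). -/
private lemma totient_pow_factorization {q : ℕ} (hq : q.Prime) (e : ℕ) :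
    (Nat.totient (q ^ e)).factorization q = e - 1 := by
  rcases Nat.eq_zero_or_pos e with he | he
  · subst he; simp
  · rw [Nat.totient_prime_pow hq he, Nat.factorization_mul (pow_pos hq.pos _).ne'
      (by have := hq.two_le; omega),
      Nat.Prime.factorization_pow hq]
    have : (q - 1).factorization q = 0 :=
      Nat.factorization_eq_zero_of_not_dvd (Nat.not_dvd_of_pos_of_lt (by have := hq.two_le; omega) (by have := hq.two_le; omega))
    simp [this]

private lemma key (k l a b μ t p : ℕ) (hk : 0 < k) (hl : 0 < l) (ha : 0 < a) (hb : 0 < b)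
    (hμa : μ ∣ a) (hμb : μ ∣ b) (hμ2 : 2 < μ) (hp : p.Prime)
    (hpk : ∀ r ∈ (k * l).primeFactors, r < p) (ht : 0 < t) (htμ : t % μ = 1) :
    ∀ N m n : ℕ, m * n ≤ N → 0 < m → 0 < n →
      Nat.totient (k * m ^ a) ≠ p ^ t * Nat.totient (l * n ^ b) := by
  have hμ3 : 3 ≤ μ := hμ2
  have hμle_a : μ ≤ a := Nat.le_of_dvd ha hμa
  have hμle_b : μ ≤ b := Nat.le_of_dvd hb hμb
  intro N
  induction N using Nat.strong_induction_on with
  | _ N IH =>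
    intro m n hmn hm hn heq
    -- q : the largest prime factor of m * n * p
    set q := maxPrimeFac (m * n * p) with hqdef
    have hppos := hp.pos
    have hmnp : (0:ℕ) < m * n * p := by positivity
    have hpmem : p ∈ (m * n * p).primeFactors :=
      Nat.mem_primeFactors.2 ⟨hp, dvd_mul_left p (m * n), hmnp.ne'⟩
    obtain ⟨hqmem, hqle⟩ := maxPrimeFac_spec ⟨p, hpmem⟩
    have hq : q.Prime := Nat.prime_of_mem_primeFactors hqmem
    have hpq : p ≤ q := hqle p hpmem
    have hqmnp : q ∣ m * n * p := Nat.dvd_of_mem_primeFactors hqmem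
    -- q does not divide k or l
    have hqpos := hq.pos
    have hqk : ¬ q ∣ k := fun h => by
      have := hpk q (Nat.mem_primeFactors.2 ⟨hq, h.mul_right l, by positivity⟩); omega
    have hql : ¬ q ∣ l := fun h => by
      have := hpk q (Nat.mem_primeFactors.2 ⟨hq, h.mul_left k, by positivity⟩); omega
    -- split off the q-parts of m and n
    set α := m.factorization q with hα
    set β := n.factorization q with hβ
    set m' := m / q ^ α with hm'def
    set n' := n / q ^ β with hn'def
    have hm' : q ^ α * m' = m := Nat.ordProj_mul_ordCompl_eq_self m q
    have hn' : q ^ β * n' = n := Nat.ordProj_mul_ordCompl_eq_self n q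
    have hqm' : ¬ q ∣ m' := Nat.not_dvd_ordCompl hq hm.ne'
    have hqn' : ¬ q ∣ n' := Nat.not_dvd_ordCompl hq hn.ne'
    have hm'pos : 0 < m' := Nat.ordCompl_pos q hm.ne'
    have hn'pos : 0 < n' := Nat.ordCompl_pos q hn.ne'
    -- rewrite the totients
    have hkm : k * m ^ a = q ^ (a * α) * (k * m' ^ a) := by
      rw [← hm']; ring
    have hln : l * n ^ b = q ^ (b * β) * (l * n' ^ b) := by
      rw [← hn']; ring
    have hqkm' : ¬ q ∣ k * m' ^ a := by
      intro h
      rcases (Nat.Prime.dvd_mul hq).1 h with h | h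
      · exact hqk h
      · exact hqm' (hq.dvd_of_dvd_pow h)
    have hqln' : ¬ q ∣ l * n' ^ b := by
      intro h
      rcases (Nat.Prime.dvd_mul hq).1 h with h | h
      · exact hql h
      · exact hqn' (hq.dvd_of_dvd_pow h)
    have hcop1 : Nat.Coprime (q ^ (a * α)) (k * m' ^ a) :=
      Nat.Coprime.pow_left _ ((Nat.Prime.coprime_iff_not_dvd hq).2 hqkm')
    have hcop2 : Nat.Coprime (q ^ (b * β)) (l * n' ^ b) :=
      Nat.Coprime.pow_left _ ((Nat.Prime.coprime_iff_not_dvd hq).2 hqln')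
    set A := Nat.totient (k * m' ^ a) with hA
    set B := Nat.totient (l * n' ^ b) with hB
    have heq2 : Nat.totient (q ^ (a * α)) * A = p ^ t * (Nat.totient (q ^ (b * β)) * B) := by
      rw [hA, hB, ← Nat.totient_mul hcop1, ← Nat.totient_mul hcop2, ← hkm, ← hln]
      exact heq
    -- q does not divide A or B
    have hqA : ¬ q ∣ A := by
      apply not_dvd_totient hq (by positivity)
      intro r hr
      have hrp := Nat.prime_of_mem_primeFactors hr
      have hrd := Nat.dvd_of_mem_primeFactors hr
      rcases (Nat.Prime.dvd_mul hrp).1 hrd with h | h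
      · have := hpk r (Nat.mem_primeFactors.2 ⟨hrp, h.mul_right l, by positivity⟩); omega
      · have hrm' : r ∣ m' := hrp.dvd_of_dvd_pow h
        have hrm : r ∣ m := hrm'.trans ⟨q ^ α, by rw [← hm']; ring⟩
        have hrle : r ≤ q := hqle r (Nat.mem_primeFactors.2 ⟨hrp,
          (hrm.mul_right n).mul_right p, hmnp.ne'⟩)
        rcases lt_or_eq_of_le hrle with h' | h'
        · exact h'
        · exact absurd (h' ▸ hrm') hqm'
    have hqB : ¬ q ∣ B := by
      apply not_dvd_totient hq (by positivity)
      intro r hr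
      have hrp := Nat.prime_of_mem_primeFactors hr
      have hrd := Nat.dvd_of_mem_primeFactors hr
      rcases (Nat.Prime.dvd_mul hrp).1 hrd with h | h
      · have := hpk r (Nat.mem_primeFactors.2 ⟨hrp, h.mul_left k, by positivity⟩); omega
      · have hrn' : r ∣ n' := hrp.dvd_of_dvd_pow h
        have hrn : r ∣ n := hrn'.trans ⟨q ^ β, by rw [← hn']; ring⟩
        have hrle : r ≤ q := hqle r (Nat.mem_primeFactors.2 ⟨hrp,
          ((hrn.mul_left m).mul_right p), hmnp.ne'⟩)
        rcases lt_or_eq_of_le hrle with h' | h'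
        · exact h'
        · exact absurd (h' ▸ hrn') hqn'
    -- take q-adic valuations of heq2
    have hApos : 0 < A := Nat.totient_pos.2 (by positivity)
    have hBpos : 0 < B := Nat.totient_pos.2 (by positivity)
    have htotpos : ∀ e : ℕ, 0 < Nat.totient (q ^ e) := fun e => Nat.totient_pos.2 (by positivity)
    have hval : (a * α - 1) + 0 = (if q = p then t else 0) + ((b * β - 1) + 0) := by
      have := congrArg (fun x => x.factorization q) heq2
      rw [Nat.factorization_mul (htotpos (a*α)).ne' hApos.ne',
          Nat.factorization_mul (pow_pos hppos t).ne'
            (Nat.mul_ne_zero (htotpos (b*β)).ne' hBpos.ne'),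
          Nat.factorization_mul (htotpos (b*β)).ne' hBpos.ne'] at this
      simp only [Finsupp.add_apply] at this
      rw [totient_pow_factorization hq, totient_pow_factorization hq,
          Nat.factorization_eq_zero_of_not_dvd hqA,
          Nat.factorization_eq_zero_of_not_dvd hqB] at this
      rcases eq_or_ne q p with hqp | hqp
      · rw [hqp] at this ⊢
        rw [if_pos rfl]
        simpa [Nat.Prime.factorization_pow hp] using this
      · rw [if_neg hqp]
        have : (p ^ t).factorization q = 0 := Nat.factorization_eq_zero_of_not_dvd (by
          intro h
          exact hqp ((Nat.prime_dvd_prime_iff_eq hq hp).1 (hq.dvd_of_dvd_pow h)))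
        omega
    simp only [add_zero] at hval
    -- arithmetic facts
    have hmodt : t = μ * (t / μ) + 1 := by
      conv_lhs => rw [← Nat.div_add_mod t μ]
      rw [htμ]
    rcases eq_or_ne q p with hqp | hqp
    · -- q = p : contradiction mod μ
      rw [if_pos hqp] at hval
      rcases Nat.eq_zero_or_pos α with hα0 | hα1
      · -- LHS is 0, so t + (bβ - 1) = 0, impossible
        rw [hα0] at hval; simp at hval; omega
      · have haα : 3 ≤ a * α := le_trans hμ3 (le_trans hμle_a (Nat.le_mul_of_pos_right a hα1))
        rcases Nat.eq_zero_or_pos β with hβ0 | hβ1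
        · -- aα - 1 = t, so μ ∣ t + 1; but t ≡ 1 mod μ and μ > 2
          rw [hβ0] at hval
          simp at hval
          have hdvd : μ ∣ t + 1 := by
            have : t + 1 = a * α := by omega
            rw [this]
            exact hμa.mul_right α
          obtain ⟨c, hc⟩ := hdvd
          obtain ⟨d, hd⟩ := hμa
          -- t + 1 = μ c, t = μ (t/μ) + 1 ⇒ μ c = μ (t/μ) + 2 ⇒ μ ∣ 2
          have h2 : μ * c = μ * (t / μ) + 2 := by omega
          have : μ ∣ 2 := ⟨c - t / μ, by rw [Nat.mul_sub]; omega⟩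
          have := Nat.le_of_dvd (by norm_num) this
          omega
        · have hbβ : 3 ≤ b * β := le_trans hμ3 (le_trans hμle_b (Nat.le_mul_of_pos_right b hβ1))
          -- aα = t + bβ ⇒ μ ∣ t, contradiction
          have heqv : a * α = t + b * β := by omega
          have hdvd : μ ∣ t := by
            have h1 : μ ∣ a * α := hμa.mul_right α
            have h2 : μ ∣ b * β := hμb.mul_right β
            have := Nat.dvd_sub h1 h2
            rw [heqv] at this
            simpa using this
          have := Nat.mod_eq_zero_of_dvd hdvd
          omega
    · -- q ≠ p : valuation equation is aα - 1 = bβ - 1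
      rw [if_neg hqp] at hval
      have hqmn : q ∣ m * n := by
        rcases (Nat.Prime.dvd_mul hq).1 hqmnp with h | h
        · exact h
        · exact absurd ((Nat.prime_dvd_prime_iff_eq hq hp).1 h) hqp
      have hαβpos : 0 < α ∨ 0 < β := by
        rcases (Nat.Prime.dvd_mul hq).1 hqmn with h | h
        · left; exact (Nat.Prime.factorization_pos_of_dvd hq hm.ne' h)
        · right; exact (Nat.Prime.factorization_pos_of_dvd hq hn.ne' h)
      rcases Nat.eq_zero_or_pos α with hα0 | hα1
      · have hβ1 : 0 < β := by omega
        have hbβ : 3 ≤ b * β := le_trans hμ3 (le_trans hμle_b (Nat.le_mul_of_pos_right b hβ1))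
        rw [hα0] at hval; simp at hval; omega
      · have haα : 3 ≤ a * α := le_trans hμ3 (le_trans hμle_a (Nat.le_mul_of_pos_right a hα1))
        rcases Nat.eq_zero_or_pos β with hβ0 | hβ1
        · rw [hβ0] at hval; simp at hval; omega
        · have hbβ : 3 ≤ b * β := le_trans hμ3 (le_trans hμle_b (Nat.le_mul_of_pos_right b hβ1))
          have heqv : a * α = b * β := by omega
          -- cancel the equal totient factors and use induction
          have heq3 : A = p ^ t * B := by
            have h := heq2
            rw [heqv] at h
            have h2 : Nat.totient (q ^ (b * β)) * A
                = Nat.totient (q ^ (b * β)) * (p ^ t * B) := by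
              rw [h]; ring
            exact Nat.eq_of_mul_eq_mul_left (htotpos _) h2
          have hlt : m' * n' < N := by
            have hq2 : 2 ≤ q := hq.two_le
            have hqα : 2 ≤ q ^ α := by
              calc 2 = 2 ^ 1 := rfl
              _ ≤ q ^ 1 := Nat.pow_le_pow_left hq2 1
              _ ≤ q ^ α := Nat.pow_le_pow_right (by omega) hα1
            have hmm : m' < m := by
              rw [← hm']
              have h1 : 1 * m' < q ^ α * m' :=
                Nat.mul_lt_mul_of_lt_of_le (by omega) le_rfl hm'pos
              simpa using h1
            have hnn : n' ≤ n := by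
              rw [← hn']
              have h1 : 1 * n' ≤ q ^ β * n' :=
                Nat.mul_le_mul_right n' (pow_pos hqpos β)
              simpa using h1
            calc m' * n' ≤ m' * n := Nat.mul_le_mul_left m' hnn
            _ < m * n := Nat.mul_lt_mul_of_lt_of_le hmm le_rfl hn
            _ ≤ N := hmn
          exact IH (m' * n') hlt m' n' le_rfl hm'pos hn'pos heq3

theorem stmt_3 (k l a b μ t : ℕ) (hk : 0 < k) (hl : 0 < l) (ha : 0 < a) (hb : 0 < b)
    (hμ : μ = Nat.gcd a b) (hμ2 : 2 < μ) (p : ℕ) (hp : p.Prime)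
    (hpkl : maxPrimeFac (k * l) < p) (ht : 0 < t) (htμ : t % μ = 1) :
    ¬ ∃ m n : ℕ, 0 < m ∧ 0 < n ∧
      (p : ℚ) ^ t = (Nat.totient (k * m ^ a) : ℚ) / (Nat.totient (l * n ^ b) : ℚ) := by
  rintro ⟨m, n, hm, hn, heq⟩
  have hBpos : 0 < Nat.totient (l * n ^ b) := Nat.totient_pos.2 (by positivity)
  have hBQ : (Nat.totient (l * n ^ b) : ℚ) ≠ 0 := by exact_mod_cast hBpos.ne'
  rw [eq_div_iff hBQ] at heq
  have heqN : Nat.totient (k * m ^ a) = p ^ t * Nat.totient (l * n ^ b) := by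
    exact_mod_cast heq.symm
  have hpk : ∀ r ∈ (k * l).primeFactors, r < p := by
    intro r hr
    have := (maxPrimeFac_spec ⟨r, hr⟩).2 r hr
    omega
  exact key k l a b μ t p hk hl ha hb (hμ ▸ Nat.gcd_dvd_left a b) (hμ ▸ Nat.gcd_dvd_right a b)
    hμ2 hp hpk ht htμ (m * n) m n le_rfl hm hn heqN
end

section
/- Let k and l be positive integers with (k, l) ≠ (1, 1), let p = P(k·l) be the largest prime factor of k·l, and suppose p divides gcd(k, l). Then there are no positive integers m and n such that p^{|v_p(k) − v_p(l)| + 1} = φ(k·m^2)/φ(l·n^2), where v_p denotes the p-adic valuation. -/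
lemma maxPrimeFac_spec_s5 {N : ℕ} (hN : 1 < N) :
    (maxPrimeFac N).Prime ∧ maxPrimeFac N ∣ N ∧
      ∀ r, r.Prime → r ∣ N → r ≤ maxPrimeFac N := by
  have hne : N.primeFactors.Nonempty := Nat.nonempty_primeFactors.mpr hN
  obtain ⟨P, hP⟩ := Finset.max_of_nonempty hne
  have hfac : maxPrimeFac N = P := by simp [maxPrimeFac, hP]
  have hmem := Finset.mem_of_max hP
  refine ⟨?_, ?_, ?_⟩ <;> rw [hfac]
  · exact Nat.prime_of_mem_primeFactors hmem
  · exact Nat.dvd_of_mem_primeFactors hmem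
  · intro r hr hrN
    have h1 : (r : WithBot ℕ) ≤ N.primeFactors.max :=
      Finset.le_max (Nat.mem_primeFactors.mpr ⟨hr, hrN, by omega⟩)
    rw [hP] at h1
    exact WithBot.coe_le_coe.mp h1

lemma tot_fac {q N : ℕ} (hq : q.Prime) (hN : N ≠ 0)
    (h : ∀ r ∈ N.primeFactors, ¬ q ∣ r - 1) :
    (Nat.totient N).factorization q = N.factorization q - 1 := by
  have hne : ∀ r ∈ N.factorization.support,
      r ^ (N.factorization r - 1) * (r - 1) ≠ 0 := by
    intro r hr
    have hrp : r.Prime := Nat.prime_of_mem_primeFactors hr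
    have h2 := hrp.two_le
    exact Nat.mul_ne_zero (pow_ne_zero _ hrp.pos.ne') (by omega)
  rw [Nat.totient_eq_prod_factorization hN, Finsupp.prod,
    Nat.factorization_prod hne, Finset.sum_apply']
  have hterm : ∀ r ∈ N.factorization.support,
      (r ^ (N.factorization r - 1) * (r - 1)).factorization q =
        if r = q then N.factorization q - 1 else 0 := by
    intro r hr
    have hrp : r.Prime := Nat.prime_of_mem_primeFactors hr
    have h2 := hrp.two_le
    rw [Nat.factorization_mul (pow_ne_zero _ hrp.pos.ne') (by omega : r - 1 ≠ 0),
      Finsupp.add_apply, hrp.factorization_pow,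
      Nat.factorization_eq_zero_of_not_dvd (h r hr), Finsupp.single_apply]
    by_cases hrq : r = q <;> simp [hrq]
  rw [Finset.sum_congr rfl hterm, Finset.sum_ite_eq' N.factorization.support q
    (fun _ => N.factorization q - 1)]
  by_cases hqN : q ∈ N.factorization.support
  · rw [if_pos hqN]
  · rw [if_neg hqN, Finsupp.notMem_support_iff.mp hqN]; rfl

lemma key_ind (p k l : ℕ) (hpp : p.Prime) (hk : k ≠ 0) (hl : l ≠ 0)
    (hpk : p ∣ k) (hpl : p ∣ l)
    (hmax : ∀ r, r.Prime → r ∣ k * l → r ≤ p) :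
    ∀ N m n : ℕ, m ≠ 0 → n ≠ 0 → m * n ≤ N →
      Nat.totient (k * m ^ 2) ≠
        p ^ (((padicValNat p k : ℤ) - (padicValNat p l : ℤ)).natAbs + 1) *
          Nat.totient (l * n ^ 2) := by
  intro N
  induction N with
  | zero => intro m n hm hn hmn; exact absurd hmn (by have := Nat.mul_ne_zero hm hn; omega)
  | succ N ih =>
    intro m n hm hn hmn heq
    set c : ℕ := ((padicValNat p k : ℤ) - (padicValNat p l : ℤ)).natAbs + 1 with hc
    have hK : k * m ^ 2 ≠ 0 := by positivity
    have hL : l * n ^ 2 ≠ 0 := by positivity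
    have hφK : Nat.totient (k * m ^ 2) ≠ 0 :=
      (Nat.totient_pos.mpr (Nat.pos_of_ne_zero hK)).ne'
    have hφL : Nat.totient (l * n ^ 2) ≠ 0 :=
      (Nat.totient_pos.mpr (Nat.pos_of_ne_zero hL)).ne'
    have hpKL : p ∣ (k * m ^ 2) * (l * n ^ 2) :=
      dvd_mul_of_dvd_left (dvd_mul_of_dvd_left hpk _) _
    have hKL1 : 1 < (k * m ^ 2) * (l * n ^ 2) := by
      have h1 := Nat.le_of_dvd (by positivity) hpKL
      have := hpp.two_le; omega
    obtain ⟨hQp, hQd, hQmax⟩ := maxPrimeFac_spec_s5 hKL1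
    set Q := maxPrimeFac ((k * m ^ 2) * (l * n ^ 2)) with hQ
    have hrle : ∀ r ∈ ((k * m ^ 2) * (l * n ^ 2)).primeFactors, r ≤ Q := fun r hr =>
      hQmax r (Nat.prime_of_mem_primeFactors hr) (Nat.dvd_of_mem_primeFactors hr)
    have hpQ : p ≤ Q := hQmax p hpp hpKL
    -- valuation of totient equations
    have hnd : ∀ r ∈ ((k * m ^ 2) * (l * n ^ 2)).primeFactors, ¬ Q ∣ r - 1 := by
      intro r hr hdvd
      have h1 := hrle r hr
      have h2 := (Nat.prime_of_mem_primeFactors hr).two_le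
      have h3 := Nat.le_of_dvd (by omega) hdvd
      omega
    have hndK : ∀ r ∈ (k * m ^ 2).primeFactors, ¬ Q ∣ r - 1 := fun r hr =>
      hnd r (Nat.primeFactors_mono (dvd_mul_right _ _) (by positivity) hr)
    have hndL : ∀ r ∈ (l * n ^ 2).primeFactors, ¬ Q ∣ r - 1 := fun r hr =>
      hnd r (Nat.primeFactors_mono (dvd_mul_left _ _) (by positivity) hr)
    have hvK := tot_fac hQp hK hndK
    have hvL := tot_fac hQp hL hndL
    have hfKQ : (k * m ^ 2).factorization Q = k.factorization Q + 2 * m.factorization Q := by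
      rw [Nat.factorization_mul hk (by positivity), Nat.factorization_pow]
      simp [mul_comm]
    have hfLQ : (l * n ^ 2).factorization Q = l.factorization Q + 2 * n.factorization Q := by
      rw [Nat.factorization_mul hl (by positivity), Nat.factorization_pow]
      simp [mul_comm]
    have heqQ : (Nat.totient (k * m ^ 2)).factorization Q =
        (p ^ c).factorization Q + (Nat.totient (l * n ^ 2)).factorization Q := by
      rw [heq, Nat.factorization_mul (pow_ne_zero _ hpp.pos.ne') hφL]; rfl
    by_cases hQeqp : Q = p
    · -- base case: parity contradiction at p
      have hak : 1 ≤ k.factorization p := hpp.factorization_pos_of_dvd hk hpk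
      have hal : 1 ≤ l.factorization p := hpp.factorization_pos_of_dvd hl hpl
      have hpc : (p ^ c).factorization p = c := by
        rw [hpp.factorization_pow, Finsupp.single_eq_same]
      have hvpk : padicValNat p k = k.factorization p := (Nat.factorization_def k hpp).symm
      have hvpl : padicValNat p l = l.factorization p := (Nat.factorization_def l hpp).symm
      rw [hQeqp] at hvK hvL hfKQ hfLQ
      rw [hQeqp, hvK, hvL, hpc, hfKQ, hfLQ] at heqQ
      rw [hc, hvpk, hvpl] at heqQ
      omega
    · -- strip off Q
      have hQlt : p < Q := lt_of_le_of_ne hpQ (Ne.symm hQeqp)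
      have hQk : ¬ Q ∣ k := fun hd =>
        absurd (hmax Q hQp (dvd_mul_of_dvd_left hd _)) (by omega)
      have hQl : ¬ Q ∣ l := fun hd =>
        absurd (hmax Q hQp (hd.mul_left k)) (by omega)
      have hpcQ : (p ^ c).factorization Q = 0 := by
        rw [hpp.factorization_pow, Finsupp.single_eq_of_ne (by omega)]
      rw [hvK, hvL, hpcQ, hfKQ, hfLQ, Nat.factorization_eq_zero_of_not_dvd hQk,
        Nat.factorization_eq_zero_of_not_dvd hQl, zero_add] at heqQ
      set t := m.factorization Q with ht
      set s := n.factorization Q with hs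
      -- Q divides m or n
      have hQmn : Q ∣ m ∨ Q ∣ n := by
        rcases hQp.dvd_mul.mp hQd with h1 | h1
        · rcases hQp.dvd_mul.mp h1 with h2 | h2
          · exact absurd h2 hQk
          · exact Or.inl (hQp.dvd_of_dvd_pow h2)
        · rcases hQp.dvd_mul.mp h1 with h2 | h2
          · exact absurd h2 hQl
          · exact Or.inr (hQp.dvd_of_dvd_pow h2)
      have hts : 1 ≤ t ∨ 1 ≤ s := by
        rcases hQmn with h1 | h1
        · exact Or.inl (hQp.factorization_pos_of_dvd hm h1)
        · exact Or.inr (hQp.factorization_pos_of_dvd hn h1)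
      obtain ⟨hteq, ht1⟩ : t = s ∧ 1 ≤ t := by omega
      -- decompose m and n
      set m' := ordCompl[Q] m with hm'
      set n' := ordCompl[Q] n with hn'
      have hmm : Q ^ t * m' = m := Nat.ordProj_mul_ordCompl_eq_self m Q
      have hnn : Q ^ t * n' = n := by
        rw [hteq, hs]; exact Nat.ordProj_mul_ordCompl_eq_self n Q
      have hm'0 : m' ≠ 0 := (Nat.ordCompl_pos Q hm).ne'
      have hn'0 : n' ≠ 0 := (Nat.ordCompl_pos Q hn).ne'
      have hQm' : ¬ Q ∣ m' := Nat.not_dvd_ordCompl hQp hm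
      have hQn' : ¬ Q ∣ n' := Nat.not_dvd_ordCompl hQp hn
      have hcopK : Nat.Coprime (k * m' ^ 2) (Q ^ (2 * t)) := by
        refine Nat.Coprime.pow_right _ ((Nat.coprime_comm.mp ?_))
        exact (hQp.coprime_iff_not_dvd).mpr (fun hd => by
          rcases hQp.dvd_mul.mp hd with h1 | h1
          · exact hQk h1
          · exact hQm' (hQp.dvd_of_dvd_pow h1))
      have hcopL : Nat.Coprime (l * n' ^ 2) (Q ^ (2 * t)) := by
        refine Nat.Coprime.pow_right _ ((Nat.coprime_comm.mp ?_))
        exact (hQp.coprime_iff_not_dvd).mpr (fun hd => by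
          rcases hQp.dvd_mul.mp hd with h1 | h1
          · exact hQl h1
          · exact hQn' (hQp.dvd_of_dvd_pow h1))
      have hKdec : k * m ^ 2 = (k * m' ^ 2) * Q ^ (2 * t) := by
        rw [← hmm]; ring
      have hLdec : l * n ^ 2 = (l * n' ^ 2) * Q ^ (2 * t) := by
        rw [← hnn]; ring
      rw [hKdec, hLdec, Nat.totient_mul hcopK, Nat.totient_mul hcopL,
        ← mul_assoc] at heq
      have hφQ : 0 < Nat.totient (Q ^ (2 * t)) := Nat.totient_pos.mpr (pow_pos hQp.pos _)
      have heq' : Nat.totient (k * m' ^ 2) = p ^ c * Nat.totient (l * n' ^ 2) :=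
        Nat.eq_of_mul_eq_mul_right hφQ heq
      -- descent
      have hQt : 2 ≤ Q ^ t := le_trans hQp.two_le (Nat.le_self_pow (by omega) Q)
      have hlt : m' * n' < m * n := by
        have h1 : 2 * m' ≤ m := by rw [← hmm]; exact Nat.mul_le_mul_right m' hQt
        have h2 : n' ≤ n := Nat.le_of_dvd (Nat.pos_of_ne_zero hn) (Nat.ordCompl_dvd n Q)
        have h3 : 2 * (m' * n') ≤ m * n := by
          have := Nat.mul_le_mul h1 h2; rwa [mul_assoc] at this
        have h4 : 1 ≤ m' * n' := Nat.one_le_iff_ne_zero.mpr (Nat.mul_ne_zero hm'0 hn'0)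
        omega
      exact ih m' n' hm'0 hn'0 (by omega) heq'

theorem stmt_5 (k l p : ℕ) (hk : 0 < k) (hl : 0 < l) (hkl : ¬ (k = 1 ∧ l = 1))
    (hp : p = maxPrimeFac (k * l)) (hdvd : p ∣ Nat.gcd k l) :
    ¬ ∃ m n : ℕ, 0 < m ∧ 0 < n ∧
      (p : ℚ) ^ (((padicValNat p k : ℤ) - (padicValNat p l : ℤ)).natAbs + 1) =
        (Nat.totient (k * m ^ 2) : ℚ) / (Nat.totient (l * n ^ 2) : ℚ) := by
  rintro ⟨m, n, hm, hn, heq⟩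
  have hkl1 : 1 < k * l := by
    have h2 : 2 ≤ k ∨ 2 ≤ l := by
      by_contra hc; push_neg at hc; exact hkl ⟨by omega, by omega⟩
    rcases h2 with h | h
    · have h3 : 2 * 1 ≤ k * l := Nat.mul_le_mul h hl
      omega
    · have h3 : 1 * 2 ≤ k * l := Nat.mul_le_mul hk h
      omega
  have hspec := maxPrimeFac_spec_s5 hkl1
  rw [← hp] at hspec
  obtain ⟨hpp, hpd, hpmax⟩ := hspec
  have hpk : p ∣ k := hdvd.trans (Nat.gcd_dvd_left k l)
  have hpl : p ∣ l := hdvd.trans (Nat.gcd_dvd_right k l)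
  have hφL : (0:ℚ) < (Nat.totient (l * n ^ 2) : ℚ) := by
    exact_mod_cast Nat.totient_pos.mpr (by positivity)
  have heqn : Nat.totient (k * m ^ 2) =
      p ^ (((padicValNat p k : ℤ) - (padicValNat p l : ℤ)).natAbs + 1) *
        Nat.totient (l * n ^ 2) := by
    have h1 : ((p:ℚ)) ^ (((padicValNat p k : ℤ) - (padicValNat p l : ℤ)).natAbs + 1) *
        (Nat.totient (l * n ^ 2) : ℚ) = (Nat.totient (k * m ^ 2) : ℚ) := by
      rw [heq]; field_simp
    exact_mod_cast h1.symm
  exact key_ind p k l hpp hk.ne' hl.ne' hpk hpl hpmax (m * n) m n hm.ne' hn.ne'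
    le_rfl heqn
end

section
/- Let k, l, a and b be positive integers with gcd(a, b) > 1, and let r be a positive rational number. If r = φ(k·m^a)/φ(l·n^b) and r = φ(k·m'^a)/φ(l·n'^b) are both proper representations of r (with m, n, m', n' positive integers), then m = m' and n = n'. -/
/-- A representation `r = φ(k·m^a)/φ(l·n^b)` is *proper* if there are no positive
integers `d₁ > 1`, `d₂`, `m₁`, `n₁` with `m = m₁·d₁`, `n = n₁·d₂`, `d₁^a = d₂^b`,
such that every prime `p ∣ d₁·d₂` satisfies `p ∣ gcd(k·m₁, l·n₁)` or
`gcd(p, k·l·m₁·n₁) = 1`. -/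
def IsProperRep (k l a b m n : ℕ) : Prop :=
  ¬ ∃ d₁ d₂ m₁ n₁ : ℕ,
      1 < d₁ ∧ 0 < d₂ ∧ 0 < m₁ ∧ 0 < n₁ ∧
      m = m₁ * d₁ ∧ n = n₁ * d₂ ∧ d₁ ^ a = d₂ ^ b ∧
      ∀ p : ℕ, p.Prime → p ∣ d₁ * d₂ →
        p ∣ Nat.gcd (k * m₁) (l * n₁) ∨ Nat.Coprime p (k * l * m₁ * n₁)

open Nat

lemma vP_ne (P q : ℕ) (hq : 0 < q) (hlt : q < P) : q.factorization P = 0 :=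
  Nat.factorization_eq_zero_of_not_dvd (fun h => absurd (Nat.le_of_dvd hq h) (not_le.mpr hlt))

-- Lemma B
lemma lemB (P : ℕ) (hP : P.Prime) (k : ℕ) (hk : 0 < k) :
    ∀ m, 0 < m → (∀ q, q.Prime → q ∣ m → q < P) →
    (Nat.totient (k * m)).factorization P = (Nat.totient k).factorization P := by
  intro m
  induction m using Nat.strong_induction_on with
  | _ m IH =>
    intro hm hq
    rcases eq_or_lt_of_le (show 1 ≤ m from hm) with h1 | h1
    · simp [← h1]
    · have hqp : m.minFac.Prime := Nat.minFac_prime (by omega)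
      have hqd : m.minFac ∣ m := Nat.minFac_dvd m
      have hqlt : m.minFac < P := hq _ hqp hqd
      obtain ⟨m', hm'⟩ := hqd
      have hm'pos : 0 < m' := by
        rcases Nat.eq_zero_or_pos m' with h | h
        · exfalso; rw [h, mul_zero] at hm'; omega
        · exact h
      have hm'lt : m' < m := by
        rw [hm']; exact (Nat.lt_mul_iff_one_lt_left hm'pos).mpr hqp.one_lt
      have hqm' : ∀ p, p.Prime → p ∣ m' → p < P := fun p hp hd =>
        hq p hp (hm' ▸ (hd.mul_left m.minFac))
      have hkey : k * m = m.minFac * (k * m') := by nth_rewrite 1 [hm']; ring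
      have hIH := IH m' hm'lt hm'pos hqm'
      by_cases hdvd : m.minFac ∣ k * m'
      · rw [hkey, Nat.totient_mul_of_prime_of_dvd hqp hdvd,
          Nat.factorization_mul hqp.ne_zero (Nat.totient_pos.mpr (by positivity)).ne', Finsupp.add_apply,
          vP_ne P _ hqp.pos hqlt, zero_add, hIH]
      · have hcop : Nat.Coprime m.minFac (k * m') := (hqp.coprime_iff_not_dvd).mpr hdvd
        rw [hkey, Nat.totient_mul hcop, Nat.totient_prime hqp,
          Nat.factorization_mul (by have := hqp.two_le; omega) (Nat.totient_pos.mpr (by positivity)).ne', Finsupp.add_apply,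
          vP_ne P _ (by have := hqp.two_le; omega) (by have := hqp.two_le; omega), zero_add, hIH]

-- strip lemma: φ(u * P^e)
lemma stripE (P u e : ℕ) (hP : P.Prime) (hu : 0 < u) :
    Nat.totient (u * P ^ e) = Nat.totient u * (if P ∣ u then P ^ e else Nat.totient (P ^ e)) := by
  by_cases hd : P ∣ u
  · simp only [if_pos hd]
    induction e with
    | zero => simp
    | succ e ih =>
      have h1 : u * P ^ (e + 1) = P * (u * P ^ e) := by ring
      rw [h1, Nat.totient_mul_of_prime_of_dvd hP (hd.mul_right _), ih]
      ring
  · simp only [if_neg hd]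
    have hcop : Nat.Coprime u (P ^ e) :=
      Nat.Coprime.pow_right e (Nat.coprime_comm.mp ((hP.coprime_iff_not_dvd).mpr hd))
    exact Nat.totient_mul hcop

-- Lemma D: the P-adic valuation of φ(k * m^a)
lemma lemD (P : ℕ) (hP : P.Prime) (k m a : ℕ) (hk : 0 < k) (hm : 0 < m) (ha : 0 < a)
    (hmax : ∀ q, q.Prime → q ∣ m → q ≤ P) :
    (Nat.totient (k * m ^ a)).factorization P
      + (if 0 < m.factorization P ∧ ¬ P ∣ k then 1 else 0)
      = (Nat.totient k).factorization P + a * m.factorization P := by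
  set α := m.factorization P with hα
  set m₀ := ordCompl[P] m with hm₀
  have hsplit : P ^ α * m₀ = m := Nat.ordProj_mul_ordCompl_eq_self m P
  have hndvd : ¬ P ∣ m₀ := Nat.not_dvd_ordCompl hP hm.ne'
  have hm₀pos : 0 < m₀ := Nat.ordCompl_pos P hm.ne'
  have hm₀lt : ∀ q, q.Prime → q ∣ m₀ → q < P := by
    intro q hq hd
    refine lt_of_le_of_ne (hmax q hq (hd.trans (Nat.ordCompl_dvd m P))) (fun h => hndvd (h ▸ hd))
  have hm₀alt : ∀ q, q.Prime → q ∣ m₀ ^ a → q < P := fun q hq hd => hm₀lt q hq (hq.dvd_of_dvd_pow hd)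
  have hkm₀pos : 0 < k * m₀ ^ a := by positivity
  have key : k * m ^ a = (k * m₀ ^ a) * P ^ (α * a) := by
    rw [← hsplit, mul_pow, ← pow_mul]; ring
  have hPk : P ∣ k * m₀ ^ a ↔ P ∣ k := by
    constructor
    · intro h
      rcases (Nat.Prime.dvd_mul hP).mp h with h | h
      · exact h
      · exact absurd (hP.dvd_of_dvd_pow h) hndvd
    · exact fun h => h.mul_right _
  have hbase : (Nat.totient (k * m₀ ^ a)).factorization P = (Nat.totient k).factorization P :=
    lemB P hP k hk (m₀ ^ a) (by positivity) hm₀alt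
  rw [key, stripE P _ _ hP hkm₀pos]
  by_cases hα0 : α = 0
  · simp [hα0, hbase, Nat.totient_one]
  · have htpos : 0 < α * a := Nat.mul_pos (Nat.pos_of_ne_zero hα0) ha
    by_cases hK : P ∣ k
    · rw [if_pos (hPk.mpr hK), Nat.factorization_mul (Nat.totient_pos.mpr hkm₀pos).ne'
        (pow_pos hP.pos _).ne', Finsupp.add_apply, hbase, Nat.Prime.factorization_pow hP,
        Finsupp.single_apply, if_pos rfl, if_neg (by tauto)]
      ring
    · rw [if_neg (fun h => hK (hPk.mp h)), Nat.totient_prime_pow hP htpos,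
        Nat.factorization_mul (Nat.totient_pos.mpr hkm₀pos).ne'
          (Nat.mul_pos (pow_pos hP.pos _) (by have := hP.two_le; omega)).ne',
        Finsupp.add_apply, hbase,
        Nat.factorization_mul (pow_pos hP.pos _).ne' (by have := hP.two_le; omega),
        Finsupp.add_apply, Nat.Prime.factorization_pow hP, Finsupp.single_apply, if_pos rfl,
        vP_ne P (P - 1) (by have := hP.two_le; omega) (by have := hP.two_le; omega),
        if_pos ⟨Nat.pos_of_ne_zero hα0, hK⟩]
      have h2 : a * α = α * a := Nat.mul_comm a α
      omega

-- Step 3: the valuation of m at P is at most that of m'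
lemma step3 (k l a b P m n : ℕ) (hk : 0 < k) (hl : 0 < l) (ha : 0 < a) (hb : 0 < b)
    (hab : 1 < Nat.gcd a b) (hP : P.Prime) (hm : 0 < m) (hn : 0 < n) (α' β' : ℕ)
    (hstar : a * m.factorization P + b * β'
        + (if 0 < α' ∧ ¬ P ∣ k then 1 else 0) + (if 0 < n.factorization P ∧ ¬ P ∣ l then 1 else 0)
      = a * α' + b * n.factorization P
        + (if 0 < m.factorization P ∧ ¬ P ∣ k then 1 else 0) + (if 0 < β' ∧ ¬ P ∣ l then 1 else 0))
    (hproper : IsProperRep k l a b m n) :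
    m.factorization P ≤ α' := by
  by_contra hlt
  push_neg at hlt
  set α := m.factorization P with hαd
  set β := n.factorization P with hβd
  set g := Nat.gcd a b with hgd
  have hga : g ∣ a := Nat.gcd_dvd_left a b
  have hgb : g ∣ b := Nat.gcd_dvd_right a b
  have hag : 2 ≤ a := le_trans hab (Nat.le_of_dvd ha hga)
  have hbg : 2 ≤ b := le_trans hab (Nat.le_of_dvd hb hgb)
  set e1 : ℕ := if 0 < α ∧ ¬ P ∣ k then 1 else 0 with he1
  set e2 : ℕ := if 0 < β' ∧ ¬ P ∣ l then 1 else 0 with he2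
  set e3 : ℕ := if 0 < α' ∧ ¬ P ∣ k then 1 else 0 with he3
  set e4 : ℕ := if 0 < β ∧ ¬ P ∣ l then 1 else 0 with he4
  have he1b : e1 ≤ 1 := by rw [he1]; split <;> omega
  have he2b : e2 ≤ 1 := by rw [he2]; split <;> omega
  have he3b : e3 ≤ 1 := by rw [he3]; split <;> omega
  have he4b : e4 ≤ 1 := by rw [he4]; split <;> omega
  -- integer version
  have hZ : (a : ℤ) * α + b * β' + e3 + e4 = a * α' + b * β + e1 + e2 := by exact_mod_cast hstar
  have hgD : (g : ℤ) ∣ ((a : ℤ) * α - a * α') - (b * β - b * β') := by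
    have h1 : (g : ℤ) ∣ (a : ℤ) := Int.natCast_dvd_natCast.mpr hga
    have h2 : (g : ℤ) ∣ (b : ℤ) := Int.natCast_dvd_natCast.mpr hgb
    exact dvd_sub (dvd_sub (h1.mul_right _) (h1.mul_right _))
      (dvd_sub (h2.mul_right _) (h2.mul_right _))
  -- the balanced case
  have hbal : (a : ℤ) * α - a * α' = b * β - b * β' ∧ e1 + e2 = e3 + e4 := by
    set D : ℤ := ((a : ℤ) * α - a * α') - (b * β - b * β') with hDd
    have hDval : D = (e1 : ℤ) + e2 - e3 - e4 := by rw [hDd]; omega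
    by_cases hD0 : D = 0
    · constructor
      · rw [hDd] at hD0; omega
      · have : (e1 : ℤ) + e2 - e3 - e4 = 0 := by rw [← hDval]; exact hD0
        omega
    · exfalso
      have habs : (g : ℤ) ≤ |D| := Int.le_of_dvd (abs_pos.mpr hD0) ((dvd_abs (g:ℤ) D).mpr hgD)
      have hDb : -2 ≤ D ∧ D ≤ 2 := by rw [hDval]; omega
      have hg2 : (2 : ℤ) ≤ g := by exact_mod_cast hab
      have hDcase : D = 2 ∨ D = -2 := by rcases abs_cases D with ⟨h, _⟩ | ⟨h, _⟩ <;> omega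
      rcases hDcase with hD | hD
      · have he : e1 = 1 ∧ e2 = 1 ∧ e3 = 0 ∧ e4 = 0 := by rw [hD] at hDval; omega
        have hc1 : 0 < α ∧ ¬ P ∣ k := by
          by_contra hc; rw [he1, if_neg hc] at he; omega
        have hc2 : 0 < β' ∧ ¬ P ∣ l := by
          by_contra hc; rw [he2, if_neg hc] at he; omega
        have hc3 : α' = 0 := by
          by_contra hc
          rw [he3, if_pos ⟨Nat.pos_of_ne_zero hc, hc1.2⟩] at he; omega
        have hc4 : β = 0 := by
          by_contra hc
          rw [he4, if_pos ⟨Nat.pos_of_ne_zero hc, hc2.2⟩] at he; omega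
        -- then a*α + b*β' = 2, impossible
        have h1 : 2 * 1 ≤ a * α := Nat.mul_le_mul hag hc1.1
        have h2 : 2 * 1 ≤ b * β' := Nat.mul_le_mul hbg hc2.1
        rw [hc3, hc4] at hstar
        simp only [Nat.mul_zero] at hstar
        omega
      · have he : e3 = 1 ∧ e4 = 1 ∧ e1 = 0 ∧ e2 = 0 := by rw [hD] at hDval; omega
        have hc3 : 0 < α' ∧ ¬ P ∣ k := by
          by_contra hc; rw [he3, if_neg hc] at he; omega
        have : e1 = 1 := by rw [he1, if_pos ⟨by omega, hc3.2⟩]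
        omega
  obtain ⟨hD0, heb⟩ := hbal
  -- β' < β
  have hββ : β' < β := by
    by_contra hc
    push_neg at hc
    have hc' : (β : ℤ) ≤ β' := by exact_mod_cast hc
    have hlt' : (α' : ℤ) < α := by exact_mod_cast hlt
    have hA : (0 : ℤ) < a := by exact_mod_cast ha
    have hB : (0 : ℤ) ≤ b := by positivity
    have h1 : (0 : ℤ) < (a : ℤ) * ((α : ℤ) - α') := mul_pos hA (by omega)
    have h2 : (b : ℤ) * ((β : ℤ) - β') ≤ 0 := mul_nonpos_of_nonneg_of_nonpos hB (by omega)
    have h3 : (a : ℤ) * α - a * α' = a * ((α : ℤ) - α') := by ring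
    have h4 : (b : ℤ) * β - b * β' = b * ((β : ℤ) - β') := by ring
    rw [h3, h4] at hD0
    linarith
  -- natural-number identity
  have hNδ : a * (α - α') = b * (β - β') := by
    have h3 : ((a * (α - α') : ℕ) : ℤ) = (a : ℤ) * α - a * α' := by
      push_cast [Nat.cast_sub hlt.le]; ring
    have h4 : ((b * (β - β') : ℕ) : ℤ) = (b : ℤ) * β - b * β' := by
      push_cast [Nat.cast_sub hββ.le]; ring
    exact_mod_cast h3.trans (hD0.trans h4.symm)
  -- extract s with α - α' = b1 * s, β - β' = a1 * s
  set a1 := a / g with ha1d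
  set b1 := b / g with hb1d
  have ha1 : a = g * a1 := (Nat.mul_div_cancel' hga).symm
  have hb1 : b = g * b1 := (Nat.mul_div_cancel' hgb).symm
  have ha1pos : 0 < a1 := Nat.div_pos (Nat.le_of_dvd ha hga) (by omega)
  have hb1pos : 0 < b1 := Nat.div_pos (Nat.le_of_dvd hb hgb) (by omega)
  have hcop : Nat.Coprime a1 b1 := Nat.coprime_div_gcd_div_gcd (by omega)
  have hred : a1 * (α - α') = b1 * (β - β') := by
    have h5 : g * (a1 * (α - α')) = g * (b1 * (β - β')) := by
      rw [← Nat.mul_assoc, ← Nat.mul_assoc, ← ha1, ← hb1]; exact hNδ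
    exact Nat.eq_of_mul_eq_mul_left (by omega) h5
  have hdvdδ : b1 ∣ (α - α') := by
    have h6 : b1 ∣ a1 * (α - α') := by
      rw [hred]; exact Dvd.intro _ rfl
    exact Nat.Coprime.dvd_of_dvd_mul_left hcop.symm h6
  set sv := (α - α') / b1 with hsvd
  have hδ : α - α' = b1 * sv := (Nat.mul_div_cancel' hdvdδ).symm
  have hsvpos : 0 < sv := by
    rcases Nat.eq_zero_or_pos sv with h | h
    · rw [h, Nat.mul_zero] at hδ; omega
    · exact h
  have hγ : β - β' = a1 * sv := by
    have h5 : b1 * (a1 * sv) = b1 * (β - β') := by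
      rw [show b1 * (a1 * sv) = a1 * (b1 * sv) by ring, ← hδ]; exact hred
    exact (Nat.eq_of_mul_eq_mul_left hb1pos h5).symm
  -- construct the witness violating properness
  exfalso
  apply hproper
  have hPδm : P ^ (α - α') ∣ m := (pow_dvd_pow P (by omega : α - α' ≤ α)).trans (Nat.ordProj_dvd m P)
  have hPγn : P ^ (β - β') ∣ n := (pow_dvd_pow P (by omega : β - β' ≤ β)).trans (Nat.ordProj_dvd n P)
  refine ⟨P ^ (b1 * sv), P ^ (a1 * sv), m / P ^ (b1 * sv), n / P ^ (a1 * sv), ?_, ?_, ?_, ?_, ?_, ?_, ?_, ?_⟩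
  · exact Nat.one_lt_pow (by positivity) hP.one_lt
  · exact pow_pos hP.pos _
  · exact Nat.div_pos (Nat.le_of_dvd hm (hδ ▸ hPδm)) (pow_pos hP.pos _)
  · exact Nat.div_pos (Nat.le_of_dvd hn (hγ ▸ hPγn)) (pow_pos hP.pos _)
  · exact (Nat.div_mul_cancel (hδ ▸ hPδm)).symm
  · exact (Nat.div_mul_cancel (hγ ▸ hPγn)).symm
  · rw [← pow_mul, ← pow_mul]
    congr 1
    rw [ha1, hb1]; ring
  · intro p hp hpd
    have hpP : p = P := by
      rw [← pow_add] at hpd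
      exact (Nat.prime_dvd_prime_iff_eq hp hP).mp (hp.dvd_of_dvd_pow hpd)
    rw [hpP]
    have hM1pos : 0 < m / P ^ (b1 * sv) :=
      Nat.div_pos (Nat.le_of_dvd hm (hδ ▸ hPδm)) (pow_pos hP.pos _)
    have hN1pos : 0 < n / P ^ (a1 * sv) :=
      Nat.div_pos (Nat.le_of_dvd hn (hγ ▸ hPγn)) (pow_pos hP.pos _)
    have hm1eq : m = (m / P ^ (b1 * sv)) * P ^ (b1 * sv) := (Nat.div_mul_cancel (hδ ▸ hPδm)).symm
    have hn1eq : n = (n / P ^ (a1 * sv)) * P ^ (a1 * sv) := (Nat.div_mul_cancel (hγ ▸ hPγn)).symm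
    have h7 : α = (m / P ^ (b1 * sv)).factorization P + b1 * sv := by
      rw [hαd]
      conv_lhs => rw [hm1eq]
      rw [Nat.factorization_mul hM1pos.ne' (pow_pos hP.pos _).ne', Finsupp.add_apply,
        Nat.Prime.factorization_pow hP, Finsupp.single_apply, if_pos rfl]
    have h8 : β = (n / P ^ (a1 * sv)).factorization P + a1 * sv := by
      rw [hβd]
      conv_lhs => rw [hn1eq]
      rw [Nat.factorization_mul hN1pos.ne' (pow_pos hP.pos _).ne', Finsupp.add_apply,
        Nat.Prime.factorization_pow hP, Finsupp.single_apply, if_pos rfl]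
    have hvM1 : (m / P ^ (b1 * sv)).factorization P = α' := by omega
    have hvN1 : (n / P ^ (a1 * sv)).factorization P = β' := by omega
    have hdM1 : P ∣ m / P ^ (b1 * sv) ↔ 0 < α' := by
      rw [Nat.Prime.dvd_iff_one_le_factorization hP hM1pos.ne', hvM1]; omega
    have hdN1 : P ∣ n / P ^ (a1 * sv) ↔ 0 < β' := by
      rw [Nat.Prime.dvd_iff_one_le_factorization hP hN1pos.ne', hvN1]; omega
    have hα0 : 0 < α := by omega
    have hβ0 : 0 < β := by omega
    by_cases hK : P ∣ k
    · -- e1 = e3 = 0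
      have he1v : e1 = 0 := by rw [he1, if_neg (by tauto)]
      have he3v : e3 = 0 := by rw [he3, if_neg (by tauto)]
      by_cases hL : P ∣ l
      · exact Or.inl (Nat.dvd_gcd (hK.mul_right _) (hL.mul_right _))
      · have he4v : e4 = 1 := by rw [he4, if_pos ⟨hβ0, hL⟩]
        have he2v : e2 = 1 := by omega
        have hβ'0 : 0 < β' := by
          by_contra hc; rw [he2, if_neg (by tauto)] at he2v; omega
        exact Or.inl (Nat.dvd_gcd (hK.mul_right _)
          (Dvd.dvd.mul_left (hdN1.mpr hβ'0) l))
    · have he1v : e1 = 1 := by rw [he1, if_pos ⟨hα0, hK⟩]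
      by_cases hL : P ∣ l
      · have he2v : e2 = 0 := by rw [he2, if_neg (by tauto)]
        have he4v : e4 = 0 := by rw [he4, if_neg (by tauto)]
        have he3v : e3 = 1 := by omega
        have hα'0 : 0 < α' := by
          by_contra hc; rw [he3, if_neg (by tauto)] at he3v; omega
        exact Or.inl (Nat.dvd_gcd (Dvd.dvd.mul_left (hdM1.mpr hα'0) k) (hL.mul_right _))
      · have he4v : e4 = 1 := by rw [he4, if_pos ⟨hβ0, hL⟩]
        by_cases hα' : 0 < α'
        · have he3v : e3 = 1 := by rw [he3, if_pos ⟨hα', hK⟩]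
          have he2v : e2 = 1 := by omega
          have hβ'0 : 0 < β' := by
            by_contra hc; rw [he2, if_neg (by tauto)] at he2v; omega
          exact Or.inl (Nat.dvd_gcd (Dvd.dvd.mul_left (hdM1.mpr hα') k)
            (Dvd.dvd.mul_left (hdN1.mpr hβ'0) l))
        · have he3v : e3 = 0 := by rw [he3, if_neg (by tauto)]
          have he2v : e2 = 0 := by omega
          have hβ' : ¬ 0 < β' := by
            intro hc; rw [he2, if_pos ⟨hc, hL⟩] at he2v; omega
          right
          rw [Nat.Prime.coprime_iff_not_dvd hP]
          intro hdd
          rcases (Nat.Prime.dvd_mul hP).mp hdd with hdd | hdd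
          · rcases (Nat.Prime.dvd_mul hP).mp hdd with hdd | hdd
            · rcases (Nat.Prime.dvd_mul hP).mp hdd with hdd | hdd
              · exact hK hdd
              · exact hL hdd
            · exact hα' (hdM1.mp hdd)
          · exact hβ' (hdN1.mp hdd)

-- properness descends after removing the P-part
lemma properDescend (k l a b P α β m₀ n₀ : ℕ) (hP : P.Prime)
    (hndm : ¬ P ∣ m₀) (hndn : ¬ P ∣ n₀)
    (hproper : IsProperRep k l a b (P ^ α * m₀) (P ^ β * n₀)) :
    IsProperRep k l a b m₀ n₀ := by
  rintro ⟨d₁, d₂, m₁, n₁, h1, h2, h3, h4, h5, h6, h7, h8⟩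
  apply hproper
  refine ⟨d₁, d₂, P ^ α * m₁, P ^ β * n₁, h1, h2, Nat.mul_pos (pow_pos hP.pos _) h3, Nat.mul_pos (pow_pos hP.pos _) h4, by rw [h5]; ring,
    by rw [h6]; ring, h7, ?_⟩
  intro p hp hpd
  have hpne : p ≠ P := by
    rintro rfl
    rcases (hp.dvd_mul).mp hpd with hd | hd
    · exact hndm ((hd.trans ⟨m₁, h5.trans (Nat.mul_comm _ _)⟩))
    · exact hndn ((hd.trans ⟨n₁, h6.trans (Nat.mul_comm _ _)⟩))
  rcases h8 p hp hpd with hc | hc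
  · left
    refine Nat.dvd_gcd ?_ ?_
    · exact ((Nat.dvd_gcd_iff.mp hc).1).trans (Nat.mul_dvd_mul_left k (Dvd.intro_left _ rfl))
    · exact ((Nat.dvd_gcd_iff.mp hc).2).trans (Nat.mul_dvd_mul_left l (Dvd.intro_left _ rfl))
  · right
    have hcp : Nat.Coprime p (P ^ α) :=
      Nat.Coprime.pow_right _ ((Nat.coprime_primes hp hP).mpr hpne)
    have hcq : Nat.Coprime p (P ^ β) :=
      Nat.Coprime.pow_right _ ((Nat.coprime_primes hp hP).mpr hpne)
    have hck : Nat.Coprime p k := hc.coprime_dvd_right ⟨l * m₁ * n₁, by ring⟩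
    have hcl : Nat.Coprime p l := hc.coprime_dvd_right ⟨k * m₁ * n₁, by ring⟩
    have hcm : Nat.Coprime p m₁ := hc.coprime_dvd_right ⟨k * l * n₁, by ring⟩
    have hcn : Nat.Coprime p n₁ := hc.coprime_dvd_right ⟨k * l * m₁, by ring⟩
    exact ((((hck.mul_right hcl).mul_right (hcp.mul_right hcm)).mul_right (hcq.mul_right hcn)))

lemma arith1_s9 (b u v e2 e4 : ℕ) (hb : 2 ≤ b) (he2 : e2 ≤ 1) (he4 : e4 ≤ 1)
    (h : b * v + e4 = b * u + e2) : u = v := by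
  rcases lt_trichotomy u v with h1 | h1 | h1
  · exfalso
    have h2 : b * (u + 1) ≤ b * v := Nat.mul_le_mul_left b h1
    have h3 : b * (u + 1) = b * u + b := by ring
    linarith
  · exact h1
  · exfalso
    have h2 : b * (v + 1) ≤ b * u := Nat.mul_le_mul_left b h1
    have h3 : b * (v + 1) = b * v + b := by ring
    linarith

lemma stripD (P : ℕ) (hP : P.Prime) (k m a : ℕ) (hk : 0 < k) (hm : 0 < m) :
    Nat.totient (k * m ^ a) = Nat.totient (k * (ordCompl[P] m) ^ a)
      * (if P ∣ k then P ^ (m.factorization P * a)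
         else Nat.totient (P ^ (m.factorization P * a))) := by
  have hcpos : 0 < ordCompl[P] m := Nat.ordCompl_pos P hm.ne'
  have hndvd : ¬ P ∣ ordCompl[P] m := Nat.not_dvd_ordCompl hP hm.ne'
  have key : k * m ^ a = (k * (ordCompl[P] m) ^ a) * P ^ (m.factorization P * a) := by
    conv_lhs => rw [← Nat.ordProj_mul_ordCompl_eq_self m P]
    rw [mul_pow, ← pow_mul]; ring
  rw [key, stripE P _ _ hP (by positivity)]
  congr 1
  by_cases hK : P ∣ k
  · rw [if_pos (hK.mul_right _), if_pos hK]
  · rw [if_neg ?_, if_neg hK]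
    intro h
    rcases hP.dvd_mul.mp h with h | h
    · exact hK h
    · exact hndvd (hP.dvd_of_dvd_pow h)

lemma mainInd (k l a b : ℕ) (hk : 0 < k) (hl : 0 < l) (ha : 0 < a) (hb : 0 < b)
    (hab : 1 < Nat.gcd a b) :
    ∀ N m n m' n', m * n * (m' * n') ≤ N → 0 < m → 0 < n → 0 < m' → 0 < n' →
      Nat.totient (k * m ^ a) * Nat.totient (l * n' ^ b)
        = Nat.totient (k * m' ^ a) * Nat.totient (l * n ^ b) →
      IsProperRep k l a b m n → IsProperRep k l a b m' n' → m = m' ∧ n = n' := by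
  intro N
  induction N with
  | zero =>
    intro m n m' n' hle hm hn hm' hn' _ _ _
    exfalso
    have : 0 < m * n * (m' * n') := by positivity
    omega
  | succ N IH =>
    intro m n m' n' hle hm hn hm' hn' hEq hp1 hp2
    by_cases htriv : m * n * (m' * n') = 1
    · have h1 : m * n = 1 := Nat.eq_one_of_mul_eq_one_right htriv
      have h4 : m' * n' = 1 := Nat.eq_one_of_mul_eq_one_left htriv
      have h2 : m = 1 := Nat.eq_one_of_mul_eq_one_right h1
      have h2' : n = 1 := Nat.eq_one_of_mul_eq_one_left h1
      have h3 : m' = 1 := Nat.eq_one_of_mul_eq_one_right h4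
      have h3' : n' = 1 := Nat.eq_one_of_mul_eq_one_left h4
      exact ⟨h2.trans h3.symm, h2'.trans h3'.symm⟩
    · have hSpos : 0 < m * n * (m' * n') := by positivity
      have hS2 : 2 ≤ m * n * (m' * n') := by omega
      have hne : (m * n * (m' * n')).primeFactors.Nonempty :=
        Nat.nonempty_primeFactors.mpr hS2
      set P := (m * n * (m' * n')).primeFactors.max' hne with hPd
      have hPmem := (m * n * (m' * n')).primeFactors.max'_mem hne
      have hP : P.Prime := Nat.prime_of_mem_primeFactors hPmem
      have hPdvd : P ∣ m * n * (m' * n') := Nat.dvd_of_mem_primeFactors hPmem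
      have hmax : ∀ q, q.Prime → q ∣ m * n * (m' * n') → q ≤ P := fun q hq hd =>
        Finset.le_max' _ q (Nat.mem_primeFactors.mpr ⟨hq, hd, hSpos.ne'⟩)
      have maxm : ∀ q, q.Prime → q ∣ m → q ≤ P := fun q hq hd =>
        hmax q hq ((hd.mul_right n).mul_right _)
      have maxn : ∀ q, q.Prime → q ∣ n → q ≤ P := fun q hq hd =>
        hmax q hq ((hd.mul_left m).mul_right _)
      have maxm' : ∀ q, q.Prime → q ∣ m' → q ≤ P := fun q hq hd =>
        hmax q hq ((hd.mul_right n').mul_left _)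
      have maxn' : ∀ q, q.Prime → q ∣ n' → q ≤ P := fun q hq hd =>
        hmax q hq ((hd.mul_left m').mul_left _)
      -- valuation equation at P
      have hv := congrArg (fun x => x.factorization P) hEq
      simp only [Nat.factorization_mul (Nat.totient_pos.mpr (by positivity : 0 < k * m ^ a)).ne'
          (Nat.totient_pos.mpr (by positivity : 0 < l * n' ^ b)).ne',
        Nat.factorization_mul (Nat.totient_pos.mpr (by positivity : 0 < k * m' ^ a)).ne'
          (Nat.totient_pos.mpr (by positivity : 0 < l * n ^ b)).ne',
        Finsupp.add_apply] at hv
      have hd1 := lemD P hP k m a hk hm ha maxm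
      have hd2 := lemD P hP l n' b hl hn' hb maxn'
      have hd3 := lemD P hP k m' a hk hm' ha maxm'
      have hd4 := lemD P hP l n b hl hn hb maxn
      have hstar1 : a * m.factorization P + b * n'.factorization P
          + (if 0 < m'.factorization P ∧ ¬ P ∣ k then 1 else 0)
          + (if 0 < n.factorization P ∧ ¬ P ∣ l then 1 else 0)
        = a * m'.factorization P + b * n.factorization P
          + (if 0 < m.factorization P ∧ ¬ P ∣ k then 1 else 0)
          + (if 0 < n'.factorization P ∧ ¬ P ∣ l then 1 else 0) := by
        linarith
      have hvm : m.factorization P = m'.factorization P :=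
        le_antisymm
          (step3 k l a b P m n hk hl ha hb hab hP hm hn
            (m'.factorization P) (n'.factorization P) hstar1 hp1)
          (step3 k l a b P m' n' hk hl ha hb hab hP hm' hn'
            (m.factorization P) (n.factorization P) hstar1.symm hp2)
      have hvn : n.factorization P = n'.factorization P := by
        have hgb : Nat.gcd a b ∣ b := Nat.gcd_dvd_right a b
        have hbg : 2 ≤ b := le_trans hab (Nat.le_of_dvd hb hgb)
        have hstar2 : b * n'.factorization P + (if 0 < n.factorization P ∧ ¬ P ∣ l then 1 else 0)
            = b * n.factorization P + (if 0 < n'.factorization P ∧ ¬ P ∣ l then 1 else 0) := by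
          rw [hvm] at hstar1; linarith
        exact arith1_s9 b _ _ _ _ hbg (by split <;> omega) (by split <;> omega) hstar2
      -- strip the P-parts
      rw [stripD P hP k m a hk hm, stripD P hP k m' a hk hm',
          stripD P hP l n b hl hn, stripD P hP l n' b hl hn'] at hEq
      have hTm : (if P ∣ k then P ^ (m.factorization P * a)
            else Nat.totient (P ^ (m.factorization P * a)))
          = (if P ∣ k then P ^ (m'.factorization P * a)
            else Nat.totient (P ^ (m'.factorization P * a))) := by rw [hvm]
      have hTn : (if P ∣ l then P ^ (n.factorization P * b)
            else Nat.totient (P ^ (n.factorization P * b)))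
          = (if P ∣ l then P ^ (n'.factorization P * b)
            else Nat.totient (P ^ (n'.factorization P * b))) := by rw [hvn]
      rw [hTm, hTn] at hEq
      have hT1pos : 0 < (if P ∣ k then P ^ (m'.factorization P * a)
          else Nat.totient (P ^ (m'.factorization P * a))) := by
        split
        · exact pow_pos hP.pos _
        · exact Nat.totient_pos.mpr (pow_pos hP.pos _)
      have hT2pos : 0 < (if P ∣ l then P ^ (n'.factorization P * b)
          else Nat.totient (P ^ (n'.factorization P * b))) := by
        split
        · exact pow_pos hP.pos _
        · exact Nat.totient_pos.mpr (pow_pos hP.pos _)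
      rw [mul_mul_mul_comm, mul_mul_mul_comm (Nat.totient (k * (ordCompl[P] m') ^ a))] at hEq
      have hEq0 : Nat.totient (k * (ordCompl[P] m) ^ a) * Nat.totient (l * (ordCompl[P] n') ^ b)
          = Nat.totient (k * (ordCompl[P] m') ^ a) * Nat.totient (l * (ordCompl[P] n) ^ b) :=
        Nat.eq_of_mul_eq_mul_right (Nat.mul_pos hT1pos hT2pos) hEq
      -- properness descends
      have hq1 : IsProperRep k l a b (ordCompl[P] m) (ordCompl[P] n) := by
        refine properDescend k l a b P (m.factorization P) (n.factorization P) _ _ hP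
          (Nat.not_dvd_ordCompl hP hm.ne') (Nat.not_dvd_ordCompl hP hn.ne') ?_
        rw [Nat.ordProj_mul_ordCompl_eq_self, Nat.ordProj_mul_ordCompl_eq_self]
        exact hp1
      have hq2 : IsProperRep k l a b (ordCompl[P] m') (ordCompl[P] n') := by
        refine properDescend k l a b P (m'.factorization P) (n'.factorization P) _ _ hP
          (Nat.not_dvd_ordCompl hP hm'.ne') (Nat.not_dvd_ordCompl hP hn'.ne') ?_
        rw [Nat.ordProj_mul_ordCompl_eq_self, Nat.ordProj_mul_ordCompl_eq_self]
        exact hp2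
      -- size decrease
      have hdecomp : m * n * (m' * n')
          = (ordCompl[P] m * ordCompl[P] n * (ordCompl[P] m' * ordCompl[P] n'))
            * P ^ (m.factorization P + n.factorization P
                + m'.factorization P + n'.factorization P) := by
        conv_lhs => rw [← Nat.ordProj_mul_ordCompl_eq_self m P,
          ← Nat.ordProj_mul_ordCompl_eq_self n P,
          ← Nat.ordProj_mul_ordCompl_eq_self m' P,
          ← Nat.ordProj_mul_ordCompl_eq_self n' P]
        rw [pow_add, pow_add, pow_add]; ring
      have hredpos : 0 < ordCompl[P] m * ordCompl[P] n * (ordCompl[P] m' * ordCompl[P] n') := by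
        have := Nat.ordCompl_pos P hm.ne'
        have := Nat.ordCompl_pos P hn.ne'
        have := Nat.ordCompl_pos P hm'.ne'
        have := Nat.ordCompl_pos P hn'.ne'
        positivity
      have hEpos : m.factorization P + n.factorization P
          + m'.factorization P + n'.factorization P ≠ 0 := by
        intro h0
        rw [h0, pow_zero, Nat.mul_one] at hdecomp
        rw [hdecomp] at hPdvd
        rcases hP.dvd_mul.mp hPdvd with hc | hc
        · rcases hP.dvd_mul.mp hc with hc | hc
          · exact Nat.not_dvd_ordCompl hP hm.ne' hc
          · exact Nat.not_dvd_ordCompl hP hn.ne' hc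
        · rcases hP.dvd_mul.mp hc with hc | hc
          · exact Nat.not_dvd_ordCompl hP hm'.ne' hc
          · exact Nat.not_dvd_ordCompl hP hn'.ne' hc
      have hlt2 : ordCompl[P] m * ordCompl[P] n * (ordCompl[P] m' * ordCompl[P] n')
          < m * n * (m' * n') := by
        rw [hdecomp]
        have h2 : 2 ≤ P ^ (m.factorization P + n.factorization P
            + m'.factorization P + n'.factorization P) :=
          le_trans hP.two_le (Nat.le_self_pow hEpos P)
        calc ordCompl[P] m * ordCompl[P] n * (ordCompl[P] m' * ordCompl[P] n')
            < ordCompl[P] m * ordCompl[P] n * (ordCompl[P] m' * ordCompl[P] n') * 2 := by omega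
          _ ≤ _ := Nat.mul_le_mul_left _ h2
      obtain ⟨he1, he2⟩ := IH (ordCompl[P] m) (ordCompl[P] n) (ordCompl[P] m') (ordCompl[P] n')
        (by omega) (Nat.ordCompl_pos P hm.ne') (Nat.ordCompl_pos P hn.ne')
        (Nat.ordCompl_pos P hm'.ne') (Nat.ordCompl_pos P hn'.ne') hEq0 hq1 hq2
      constructor
      · rw [← Nat.ordProj_mul_ordCompl_eq_self m P, ← Nat.ordProj_mul_ordCompl_eq_self m' P,
          he1, hvm]
      · rw [← Nat.ordProj_mul_ordCompl_eq_self n P, ← Nat.ordProj_mul_ordCompl_eq_self n' P,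
          he2, hvn]

theorem stmt_9 (k l a b : ℕ) (hk : 0 < k) (hl : 0 < l) (ha : 0 < a) (hb : 0 < b)
    (hab : 1 < Nat.gcd a b) (r : ℚ) (hr : 0 < r) (m n m' n' : ℕ)
    (hm : 0 < m) (hn : 0 < n) (hm' : 0 < m') (hn' : 0 < n')
    (hrep : r = (Nat.totient (k * m ^ a) : ℚ) / (Nat.totient (l * n ^ b) : ℚ))
    (hproper : IsProperRep k l a b m n)
    (hrep' : r = (Nat.totient (k * m' ^ a) : ℚ) / (Nat.totient (l * n' ^ b) : ℚ))
    (hproper' : IsProperRep k l a b m' n') :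
    m = m' ∧ n = n' := by
  have hB : ((Nat.totient (l * n ^ b) : ℚ)) ≠ 0 := by
    have : 0 < Nat.totient (l * n ^ b) := Nat.totient_pos.mpr (by positivity)
    exact_mod_cast this.ne'
  have hD : ((Nat.totient (l * n' ^ b) : ℚ)) ≠ 0 := by
    have : 0 < Nat.totient (l * n' ^ b) := Nat.totient_pos.mpr (by positivity)
    exact_mod_cast this.ne'
  have h := hrep.symm.trans hrep'
  rw [div_eq_div_iff hB hD] at h
  have hEq : Nat.totient (k * m ^ a) * Nat.totient (l * n' ^ b)
      = Nat.totient (k * m' ^ a) * Nat.totient (l * n ^ b) := by exact_mod_cast h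
  exact mainInd k l a b hk hl ha hb hab (m * n * (m' * n')) m n m' n' le_rfl
    hm hn hm' hn' hEq hproper hproper'
end

section
/- Let a, b, m and n be positive integers with min{a, b} > 1. If φ(m^a) = φ(n^b), then m^a = n^b. -/
-- Lemma A: if all prime factors of n are < p, then p does not divide φ n
lemma lemA (p : ℕ) (hp : p.Prime) : ∀ n, 0 < n → (∀ q ∈ n.primeFactors, q < p) →
    ¬ p ∣ n.totient := by
  intro n
  induction n using Nat.strong_induction_on with
  | _ n ih =>
    intro hn hq hdvd
    rcases Nat.lt_or_ge n 2 with h1 | h1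
    · have hn1 : n = 1 := by omega
      subst hn1
      rw [Nat.totient_one, Nat.dvd_one] at hdvd
      exact hp.one_lt.ne' hdvd
    · set q := n.minFac with hqdef
      have hq' : q.Prime := Nat.minFac_prime (by omega)
      set e := n.factorization q with hedef
      have hqdvd : q ∣ n := Nat.minFac_dvd n
      have he : 1 ≤ e := (Nat.Prime.dvd_iff_one_le_factorization hq' (by omega)).1 hqdvd
      set n' := n / q ^ e with hn'def
      have hsplit : q ^ e * n' = n := Nat.ordProj_mul_ordCompl_eq_self n q
      have hn' : 0 < n' := Nat.ordCompl_pos q (by omega)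
      have hcop : Nat.Coprime (q ^ e) n' :=
        Nat.Coprime.pow_left _ (Nat.coprime_ordCompl hq' (by omega))
      have htot : n.totient = (q ^ e).totient * n'.totient := by
        rw [← hsplit]; exact Nat.totient_mul hcop
      have htotp : (q ^ e).totient = q ^ (e - 1) * (q - 1) :=
        Nat.totient_prime_pow hq' he
      rw [htot, htotp] at hdvd
      have hqlt : q < p := hq _ (Nat.mem_primeFactors.2 ⟨hq', hqdvd, by omega⟩)
      have hq2 : 2 ≤ q := hq'.two_le
      rcases (Nat.Prime.dvd_mul hp).1 hdvd with h2 | h2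
      · rcases (Nat.Prime.dvd_mul hp).1 h2 with h3 | h3
        · have := hp.dvd_of_dvd_pow h3
          have := (Nat.prime_dvd_prime_iff_eq hp hq').1 this
          omega
        · have := Nat.le_of_dvd (by omega) h3
          omega
      · refine ih n' ?_ hn' ?_ h2
        · rw [← hsplit]
          have : 1 < q ^ e := by
            calc 1 < q := hq'.one_lt
            _ ≤ q ^ e := Nat.le_self_pow (by omega) q
          nlinarith
        · intro r hr
          apply hq
          exact Nat.mem_primeFactors.2 ⟨Nat.prime_of_mem_primeFactors hr,
            dvd_trans (Nat.dvd_of_mem_primeFactors hr) (Nat.ordCompl_dvd n q), by omega⟩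

def Powerful (M : ℕ) : Prop := ∀ p : ℕ, p.Prime → p ∣ M → p ^ 2 ∣ M

lemma lemB_s13 : ∀ M, 0 < M → ∀ N, 0 < N → Powerful M → Powerful N →
    M.totient = N.totient → M = N := by
  intro M
  induction M using Nat.strong_induction_on with
  | _ M ih =>
    intro hM N hN hPM hPN htot
    by_cases hM1 : M = 1
    · subst hM1
      rw [Nat.totient_one] at htot
      rcases Nat.totient_eq_one_iff.1 htot.symm with h | h
      · exact h.symm
      · exfalso
        have := hPN 2 Nat.prime_two (by omega)
        omega
    by_cases hN1 : N = 1
    · subst hN1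
      rw [Nat.totient_one] at htot
      rcases Nat.totient_eq_one_iff.1 htot with h | h
      · exact h
      · exfalso
        have := hPM 2 Nat.prime_two (by omega)
        omega
    -- both ≥ 2
    have hMN : 1 < M * N := by
      calc 1 < M := by omega
      _ ≤ M * N := Nat.le_mul_of_pos_right M hN
    have hPne : (M * N).primeFactors.Nonempty :=
      Nat.nonempty_primeFactors.2 hMN
    set p := (M * N).primeFactors.max' hPne with hpdef
    have hpmem := (M * N).primeFactors.max'_mem hPne
    have hp : p.Prime := Nat.prime_of_mem_primeFactors hpmem
    have hle : ∀ q ∈ (M * N).primeFactors, q ≤ p := fun q h => Finset.le_max' _ q h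
    have hleM : ∀ q ∈ M.primeFactors, q ≤ p := by
      intro q hq
      exact hle q (Nat.mem_primeFactors.2 ⟨Nat.prime_of_mem_primeFactors hq,
        (Nat.dvd_of_mem_primeFactors hq).mul_right N, by positivity⟩)
    have hleN : ∀ q ∈ N.primeFactors, q ≤ p := by
      intro q hq
      exact hle q (Nat.mem_primeFactors.2 ⟨Nat.prime_of_mem_primeFactors hq,
        (Nat.dvd_of_mem_primeFactors hq).mul_left M, by positivity⟩)
    -- helper: structure of φ X at p
    have hval : ∀ X, 0 < X → (∀ q ∈ X.primeFactors, q ≤ p) → Powerful X → p ∣ X →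
        2 ≤ X.factorization p ∧ (X.totient).factorization p = X.factorization p - 1 := by
      intro X hX hleX hPX hpX
      have hk2 : 2 ≤ X.factorization p := by
        have := hPX p hp hpX
        exact (Nat.Prime.pow_dvd_iff_le_factorization hp (by omega)).1 this
      set k := X.factorization p with hkdef
      set X' := X / p ^ k with hX'def
      have hsplit : p ^ k * X' = X := Nat.ordProj_mul_ordCompl_eq_self X p
      have hX' : 0 < X' := Nat.ordCompl_pos p (by omega)
      have hcop : Nat.Coprime (p ^ k) X' :=
        Nat.Coprime.pow_left _ (Nat.coprime_ordCompl hp (by omega))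
      have hpX' : ¬ p ∣ X' := Nat.not_dvd_ordCompl hp (by omega)
      have hltX' : ∀ q ∈ X'.primeFactors, q < p := by
        intro q hq
        have hqP : q.Prime := Nat.prime_of_mem_primeFactors hq
        have hqd : q ∣ X := dvd_trans (Nat.dvd_of_mem_primeFactors hq) (Nat.ordCompl_dvd X p)
        have := hleX q (Nat.mem_primeFactors.2 ⟨hqP, hqd, by omega⟩)
        rcases lt_or_eq_of_le this with h | h
        · exact h
        · exact absurd (h ▸ Nat.dvd_of_mem_primeFactors hq) hpX'
      have hnp : ¬ p ∣ X'.totient := lemA p hp X' hX' hltX'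
      have htotX : X.totient = p ^ (k - 1) * (p - 1) * X'.totient := by
        rw [← hsplit, Nat.totient_mul hcop, Nat.totient_prime_pow hp (by omega)]
      refine ⟨hk2, ?_⟩
      rw [htotX]
      have h1 : (p : ℕ) - 1 ≠ 0 := by have := hp.one_lt; omega
      have h2 : X'.totient ≠ 0 := (Nat.totient_pos.2 hX').ne'
      rw [Nat.factorization_mul (Nat.mul_ne_zero (pow_ne_zero _ hp.pos.ne') h1) h2,
        Nat.factorization_mul (pow_ne_zero _ hp.pos.ne') h1,
        Nat.Prime.factorization_pow hp]
      have hd1 : (p - 1 : ℕ).factorization p = 0 := by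
        rw [Nat.factorization_eq_zero_iff]
        right; left
        intro hc
        have := Nat.le_of_dvd (by omega) hc
        omega
      have hd2 : X'.totient.factorization p = 0 := by
        rw [Nat.factorization_eq_zero_iff]
        right; left; exact hnp
      simp [Finsupp.add_apply, Finsupp.single_eq_same, hd1, hd2]
    -- p divides both M and N
    have hpMN : p ∣ M * N := Nat.dvd_of_mem_primeFactors hpmem
    have hpM : p ∣ M := by
      by_contra hc
      have hpN : p ∣ N := (hp.dvd_mul.1 hpMN).resolve_left hc
      have hvN := hval N hN hleN hPN hpN
      have hnM : ¬ p ∣ M.totient := by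
        apply lemA p hp M hM
        intro q hq
        rcases lt_or_eq_of_le (hleM q hq) with h | h
        · exact h
        · exact absurd (h ▸ Nat.dvd_of_mem_primeFactors hq) hc
      have : p ∣ N.totient := by
        have := hvN.2
        have hpos : 1 ≤ N.totient.factorization p := by omega
        exact (Nat.Prime.dvd_iff_one_le_factorization hp (Nat.totient_pos.2 hN).ne').2 hpos
      rw [← htot] at this
      exact hnM this
    have hpN : p ∣ N := by
      by_contra hc
      have hvM := hval M hM hleM hPM hpM
      have hnN : ¬ p ∣ N.totient := by
        apply lemA p hp N hN
        intro q hq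
        rcases lt_or_eq_of_le (hleN q hq) with h | h
        · exact h
        · exact absurd (h ▸ Nat.dvd_of_mem_primeFactors hq) hc
      have : p ∣ M.totient := by
        have := hvM.2
        have hpos : 1 ≤ M.totient.factorization p := by omega
        exact (Nat.Prime.dvd_iff_one_le_factorization hp (Nat.totient_pos.2 hM).ne').2 hpos
      rw [htot] at this
      exact hnN this
    obtain ⟨hkM2, hvM⟩ := hval M hM hleM hPM hpM
    obtain ⟨hkN2, hvN⟩ := hval N hN hleN hPN hpN
    have hkeq : M.factorization p = N.factorization p := by
      rw [htot] at hvM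
      omega
    set k := M.factorization p with hkdef
    set M' := M / p ^ k with hM'def
    set N' := N / p ^ (N.factorization p) with hN'def
    have hsplitM : p ^ k * M' = M := Nat.ordProj_mul_ordCompl_eq_self M p
    have hsplitN : p ^ k * N' = N := by
      rw [hkeq]; exact Nat.ordProj_mul_ordCompl_eq_self N p
    have hM' : 0 < M' := Nat.ordCompl_pos p (by omega)
    have hN' : 0 < N' := Nat.ordCompl_pos p (by omega)
    have hcopM : Nat.Coprime (p ^ k) M' :=
      Nat.Coprime.pow_left _ (Nat.coprime_ordCompl hp (by omega))
    have hcopN : Nat.Coprime (p ^ k) N' := by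
      rw [hkeq]
      exact Nat.Coprime.pow_left _ (Nat.coprime_ordCompl hp (by omega))
    have htotM : M.totient = (p ^ k).totient * M'.totient := by
      rw [← hsplitM]; exact Nat.totient_mul hcopM
    have htotN : N.totient = (p ^ k).totient * N'.totient := by
      rw [← hsplitN]; exact Nat.totient_mul hcopN
    have htot' : M'.totient = N'.totient := by
      have hpos : 0 < (p ^ k).totient := Nat.totient_pos.2 (pow_pos hp.pos k)
      rw [htotM, htotN] at htot
      exact Nat.eq_of_mul_eq_mul_left hpos htot
    have hPM' : Powerful M' := by
      intro q hq hqd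
      have hqM : q ∣ M := dvd_trans hqd (Nat.ordCompl_dvd M p)
      have hq2 : q ^ 2 ∣ M := hPM q hq hqM
      have hqp : q ≠ p := by
        intro h; subst h
        exact Nat.not_dvd_ordCompl hp (by omega) hqd
      have hcopq : Nat.Coprime (q ^ 2) (p ^ k) :=
        ((Nat.coprime_primes hq hp).2 hqp).pow _ _
      rw [← hsplitM] at hq2
      exact (Nat.Coprime.dvd_of_dvd_mul_left hcopq hq2)
    have hPN' : Powerful N' := by
      intro q hq hqd
      have hqN : q ∣ N := dvd_trans hqd (Nat.ordCompl_dvd N p)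
      have hq2 : q ^ 2 ∣ N := hPN q hq hqN
      have hqp : q ≠ p := by
        intro h; subst h
        exact Nat.not_dvd_ordCompl hp (by omega) hqd
      have hcopq : Nat.Coprime (q ^ 2) (p ^ k) :=
        ((Nat.coprime_primes hq hp).2 hqp).pow _ _
      rw [← hsplitN] at hq2
      exact (Nat.Coprime.dvd_of_dvd_mul_left hcopq hq2)
    have hlt : M' < M := by
      rw [← hsplitM]
      have : 1 < p ^ k := by
        calc 1 < p := hp.one_lt
        _ ≤ p ^ k := Nat.le_self_pow (by omega) p
      nlinarith
    have := ih M' hlt hM' N' hN' hPM' hPN' htot'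
    rw [← hsplitM, ← hsplitN, this]

theorem stmt_13 (a b m n : ℕ) (ha : 0 < a) (hb : 0 < b) (hm : 0 < m) (hn : 0 < n)
    (hmin : 1 < min a b) (h : Nat.totient (m ^ a) = Nat.totient (n ^ b)) :
    m ^ a = n ^ b := by
  have ha2 : 2 ≤ a := le_trans hmin (min_le_left a b)
  have hb2 : 2 ≤ b := le_trans hmin (min_le_right a b)
  apply lemB_s13 (m ^ a) (by positivity) (n ^ b) (by positivity) ?_ ?_ h
  · intro p hp hpd
    have hpm : p ∣ m := hp.dvd_of_dvd_pow hpd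
    calc p ^ 2 ∣ m ^ 2 := pow_dvd_pow_of_dvd hpm 2
    _ ∣ m ^ a := pow_dvd_pow m ha2
  · intro p hp hpd
    have hpn : p ∣ n := hp.dvd_of_dvd_pow hpd
    calc p ^ 2 ∣ n ^ 2 := pow_dvd_pow_of_dvd hpn 2
    _ ∣ n ^ b := pow_dvd_pow n hb2
end
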